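/- Let R be either β or βη. For all closed λ-terms F and M, if F M ≈_R M, then Θ F ≤_R M, where Θ = (λx.λy.y(xxy))(λx.λy.y(xxy)) is Turing's fixed point combinator; that is, Θ also produces least fixed points with respect to the preorder ≤_R. -/

import Mathlib

/-!
Lambda terms over a variable type `V`, intrinsically taken up to
α-equivalence, via the nested-datatype ("presheaf" / well-scoped de Bruijn)
representation: the body of a λ-abstraction is a term over `Option V`,
the bound variable being `none`.
-/

/-- λ-terms over a variable type, up to α-equivalence. -/
inductive Term : Type u → Type (u + 1)
  | var {V : Type u} : V → Term V
  | app {V : Type u} : Term V → Term V → Term V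
  | lam {V : Type u} : Term (Option V) → Term V

namespace Term

/-- Renaming of (free) variables. -/
def map : {V : Type u} → {W : Type v} → (V → W) → Term V → Term W
  | _, _, f, var v => var (f v)
  | _, _, f, app M N => app (map f M) (map f N)
  | _, _, f, lam B => lam (map (Option.map f) B)

/-- Simultaneous (capture-avoiding) substitution. -/
def bind : {V : Type u} → {W : Type v} → (V → Term W) → Term V → Term W
  | _, _, f, var v => f v
  | _, _, f, app M N => app (bind f M) (bind f N)
  | _, _, f, lam B =>
      lam (bind (fun o => Option.elim o (var none) (fun v => map some (f v))) B)

/-- The set of free variables of a term. -/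
def fv : {V : Type u} → Term V → Set V
  | _, var v => {v}
  | _, app M N => fv M ∪ fv N
  | _, lam B => {v | some v ∈ fv B}

open Classical in
/-- Capture-avoiding substitution `M[v := N]`. -/
noncomputable def subst {V : Type u} (M : Term V) (v : V) (N : Term V) : Term V :=
  M.bind (fun u => if u = v then N else var u)

/-- Instantiation of the bound variable of the body of a λ-abstraction. -/
def instantiate {V : Type u} (B : Term (Option V)) (N : Term V) : Term V :=
  B.bind (fun o => Option.elim o N var)

open Classical in
/-- λ-abstraction `λ v. M` over a named variable `v`. -/
noncomputable def abs {V : Type u} (v : V) (M : Term V) : Term V :=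
  lam (M.map (fun u => if u = v then none else some u))

end Term

/-- A term is closed if it has no free variables. -/
def Closed {V : Type u} (M : Term V) : Prop := Term.fv M = ∅

/-- The β relation: `((λv.M)N, M[v := N])`. -/
def Beta {V : Type u} (M N : Term V) : Prop :=
  ∃ B P, M = Term.app (Term.lam B) P ∧ N = Term.instantiate B P

/-- The η relation: `((λv. M v), M)` with `v ∉ FV(M)`. -/
def Eta {V : Type u} (M N : Term V) : Prop :=
  M = Term.lam (Term.app (N.map some) (Term.var none))

/-- The βη relation. -/
def BetaEta {V : Type u} (M N : Term V) : Prop := Beta M N ∨ Eta M N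

/-- One-step `R`-reduction: the least compatible relation containing `R`. -/
inductive Step {V : Type u} (R : Term V → Term V → Prop) : Term V → Term V → Prop
  | base {M N : Term V} : R M N → Step R M N
  | appL {M M' N : Term V} : Step R M M' → Step R (Term.app M N) (Term.app M' N)
  | appR {M N N' : Term V} : Step R N N' → Step R (Term.app M N) (Term.app M N')
  | abs (v : V) {M M' : Term V} : Step R M M' → Step R (Term.abs v M) (Term.abs v M')

/-- `R`-reduction `→→_R`: the least preorder containing one-step `R`-reduction. -/
def Red {V : Type u} (R : Term V → Term V → Prop) : Term V → Term V → Prop :=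
  Relation.ReflTransGen (Step R)

/-- `R`-equivalence `≈_R`: the least equivalence relation containing `→_R`. -/
def REquiv {V : Type u} (R : Term V → Term V → Prop) : Term V → Term V → Prop :=
  Relation.EqvGen (Step R)

/-- A term is `R`-reduced if it admits no one-step `R`-reduction. -/
def Reduced {V : Type u} (R : Term V → Term V → Prop) (M : Term V) : Prop :=
  ¬ ∃ N, Step R M N

/-- `N` is an `R`-normal form of `M`. -/
def IsNormalFormOf {V : Type u} (R : Term V → Term V → Prop) (M N : Term V) : Prop :=
  Reduced R N ∧ REquiv R M N

/-- The preorder `≤_R`. -/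
def LeR {V : Type u} (R : Term V → Term V → Prop) (F G : Term V) : Prop :=
  ∀ N : Term V, Closed N → ∀ N' : Term V,
    IsNormalFormOf R (Term.app F N) N' → IsNormalFormOf R (Term.app G N) N'

/-- `R_{F,y} = R ∪ S_{F,y}` where `S_{F,y} = {(y, F y)}`. -/
def Rfy {V : Type u} (R : Term V → Term V → Prop) (F : Term V) (y : V) :
    Term V → Term V → Prop :=
  fun A B => R A B ∨ (A = Term.var y ∧ B = Term.app F (Term.var y))

/-- Curry's fixed point combinator `Y = λf.(λg.f(gg))(λg.f(gg))`. -/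
def Y {V : Type u} : Term V :=
  Term.lam (Term.app
    (Term.lam (Term.app (Term.var (some none))
      (Term.app (Term.var none) (Term.var none))))
    (Term.lam (Term.app (Term.var (some none))
      (Term.app (Term.var none) (Term.var none)))))

/-- `λg. M (g g)` with `g` fresh. -/
def halfY {V : Type u} (M : Term V) : Term V :=
  Term.lam (Term.app (M.map some) (Term.app (Term.var none) (Term.var none)))

/-- `Y_{M,N} = (λg. M (g g)) (λg. N (g g))` with `g ∉ FV(M) ∪ FV(N)`. -/
def Ypair {V : Type u} (M N : Term V) : Term V := Term.app (halfY M) (halfY N)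

/-- `M^{(n)} N`: `n`-fold application of `M` to `N`. -/
def iterApp {V : Type u} (M : Term V) : ℕ → Term V → Term V
  | 0, N => N
  | n + 1, N => Term.app M (iterApp M n N)

/-- `Y_n = λf. f^{(n)} Y_{f,f}`. -/
def Yn {V : Type u} (n : ℕ) : Term V :=
  Term.lam (iterApp (Term.var none) n (Ypair (Term.var none) (Term.var none)))

/-- `Υ_F = { Y_n F' : F →→_R F', n ≥ 0 } ∪ { Y_{F',F''} : F →→_R F', F →→_R F'' }`. -/
def Upsilon {V : Type u} (R : Term V → Term V → Prop) (F : Term V) : Set (Term V) :=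
  {M | ∃ (n : ℕ) (F' : Term V), Red R F F' ∧ M = Term.app (Yn n) F'} ∪
  {M | ∃ F' F'' : Term V, Red R F F' ∧ Red R F F'' ∧ M = Ypair F' F''}

/-- The extended variable set `Ṽ_F = V ∪ V'_F`, where `V'_F` is a set
disjoint from `V` in bijection with `Υ_F`. -/
def ExtV {V : Type u} (R : Term V → Term V → Prop) (F : Term V) : Type (u + 1) :=
  V ⊕ {K : Term V // K ∈ Upsilon R F}

/-- The realization map `ρ : Λ̃_F → Λ`, substituting `K` for each `v_K ∈ V'_F`. -/
def realize {V : Type u} {R : Term V → Term V → Prop} {F : Term V} :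
    Term (ExtV R F) → Term V :=
  Term.bind (Sum.elim Term.var (fun K => K.1))

/-- The flattening map `φ_y : Λ̃_F → Λ`, substituting `y` for every variable in `V'_F`. -/
def flatten {V : Type u} {R : Term V → Term V → Prop} {F : Term V} (y : V) :
    Term (ExtV R F) → Term V :=
  Term.bind (Sum.elim Term.var (fun _ => Term.var y))

/-- `λx.λy. y (x x y)`. -/
def thetaHalf {V : Type u} : Term V :=
  Term.lam (Term.lam (Term.app (Term.var none)
    (Term.app (Term.app (Term.var (some none)) (Term.var (some none)))
      (Term.var none))))

/-- Turing's fixed point combinator `Θ = (λx.λy.y(xxy))(λx.λy.y(xxy))`. -/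
def Theta {V : Type u} : Term V := Term.app thetaHalf thetaHalf



/-! ### Infrastructure: functor/monad laws for `Term`, free variables -/

namespace Term

/-- The lifting of a substitution under a binder. -/
def up {V W : Type u} (f : V → Term W) : Option V → Term (Option W) :=
  fun o => Option.elim o (var none) (fun v => map some (f v))

@[simp] theorem bind_lam {V W : Type u} (f : V → Term W) (B : Term (Option V)) :
    bind f (lam B) = lam (bind (up f) B) := rfl

@[simp] theorem bind_app {V W : Type u} (f : V → Term W) (M N : Term V) :
    bind f (app M N) = app (bind f M) (bind f N) := rfl

@[simp] theorem bind_var' {V W : Type u} (f : V → Term W) (v : V) :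
    bind f (var v) = f v := rfl

@[simp] theorem map_lam {V W : Type u} (f : V → W) (B : Term (Option V)) :
    map f (lam B) = lam (map (Option.map f) B) := rfl

@[simp] theorem map_app {V W : Type u} (f : V → W) (M N : Term V) :
    map f (app M N) = app (map f M) (map f N) := rfl

@[simp] theorem map_var {V W : Type u} (f : V → W) (v : V) :
    map f (var v) = var (f v) := rfl

@[simp] theorem mem_fv_var {V : Type u} (w v : V) : w ∈ fv (var v) ↔ w = v := by
  simp [fv]

@[simp] theorem mem_fv_app {V : Type u} (w : V) (M N : Term V) :
    w ∈ fv (app M N) ↔ w ∈ fv M ∨ w ∈ fv N := by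
  simp [fv, Set.mem_union]

@[simp] theorem mem_fv_lam {V : Type u} (w : V) (B : Term (Option V)) :
    w ∈ fv (lam B) ↔ some w ∈ fv B := Iff.rfl

theorem map_congr : ∀ {V W : Type u} {f g : V → W} (M : Term V),
    (∀ v ∈ fv M, f v = g v) → map f M = map g M
  | _, _, _, _, var v, h => by simp [h v (by simp)]
  | _, _, _, _, app M N, h => by
      simp [map_congr M (fun v hv => h v (by simp [hv])),
            map_congr N (fun v hv => h v (by simp [hv]))]
  | _, _, _, _, lam B, h => by
      simp only [map_lam]
      congr 1
      exact map_congr B (fun o ho => by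
        cases o with
        | none => rfl
        | some v => simp [h v ho])

theorem map_map : ∀ {V W X : Type u} (f : V → W) (g : W → X) (M : Term V),
    map g (map f M) = map (fun v => g (f v)) M
  | _, _, _, f, g, var v => rfl
  | _, _, _, f, g, app M N => by simp [map_map f g M, map_map f g N]
  | _, _, _, f, g, lam B => by
      simp only [map_lam, map_map (Option.map f) (Option.map g) B]
      congr 1
      exact map_congr B (fun o _ => by cases o <;> rfl)

theorem map_id : ∀ {V : Type u} (M : Term V), map (fun v => v) M = M
  | _, var v => rfl
  | _, app M N => by simp [map_id M, map_id N]
  | _, lam B => by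
      simp only [map_lam]
      rw [map_congr B (g := fun v => v) (fun o _ => by cases o <;> rfl), map_id B]

theorem bind_congr : ∀ {V W : Type u} {f g : V → Term W} (M : Term V),
    (∀ v ∈ fv M, f v = g v) → bind f M = bind g M
  | _, _, _, _, var v, h => by simp [h v (by simp)]
  | _, _, _, _, app M N, h => by
      simp [bind_congr M (fun v hv => h v (by simp [hv])),
            bind_congr N (fun v hv => h v (by simp [hv]))]
  | _, _, _, _, lam B, h => by
      simp only [bind_lam]
      congr 1
      exact bind_congr B (fun o ho => by
        cases o with
        | none => rfl
        | some v => simp [up, h v ho])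

theorem map_eq_bind : ∀ {V W : Type u} (f : V → W) (M : Term V),
    map f M = bind (fun v => var (f v)) M
  | _, _, f, var v => rfl
  | _, _, f, app M N => by simp [map_eq_bind f M, map_eq_bind f N]
  | _, _, f, lam B => by
      simp only [map_lam, bind_lam, map_eq_bind (Option.map f) B]
      congr 1
      exact bind_congr B (fun o _ => by cases o <;> rfl)

theorem bind_map : ∀ {V W X : Type u} (f : V → W) (g : W → Term X) (M : Term V),
    bind g (map f M) = bind (fun v => g (f v)) M
  | _, _, _, f, g, var v => rfl
  | _, _, _, f, g, app M N => by simp [bind_map f g M, bind_map f g N]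
  | _, _, _, f, g, lam B => by
      simp only [map_lam, bind_lam, bind_map (Option.map f) (up g) B]
      congr 1
      exact bind_congr B (fun o _ => by cases o <;> rfl)

theorem map_bind : ∀ {V W X : Type u} (f : V → Term W) (g : W → X) (M : Term V),
    map g (bind f M) = bind (fun v => map g (f v)) M
  | _, _, _, f, g, var v => rfl
  | _, _, _, f, g, app M N => by simp [map_bind f g M, map_bind f g N]
  | _, _, _, f, g, lam B => by
      simp only [bind_lam, map_lam, map_bind (up f) (Option.map g) B]
      congr 1
      exact bind_congr B (fun o _ => by
        cases o with
        | none => rfl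
        | some v => simp [up, map_map, map_map])

theorem bind_bind : ∀ {V W X : Type u} (f : V → Term W) (g : W → Term X) (M : Term V),
    bind g (bind f M) = bind (fun v => bind g (f v)) M
  | _, _, _, f, g, var v => rfl
  | _, _, _, f, g, app M N => by simp [bind_bind f g M, bind_bind f g N]
  | _, _, _, f, g, lam B => by
      simp only [bind_lam, bind_bind (up f) (up g) B]
      congr 1
      exact bind_congr B (fun o _ => by
        cases o with
        | none => rfl
        | some v => simp [up, bind_map, map_bind])

theorem bind_var : ∀ {V : Type u} (M : Term V), bind var M = M
  | _, var v => rfl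
  | _, app M N => by simp [bind_var M, bind_var N]
  | _, lam B => by
      simp only [bind_lam]
      rw [bind_congr B (g := var) (fun o _ => by cases o <;> rfl), bind_var B]

theorem mem_fv_map : ∀ {V W : Type u} (f : V → W) (M : Term V) (w : W),
    w ∈ fv (map f M) ↔ ∃ v ∈ fv M, f v = w
  | _, _, f, var v, w => by simp [eq_comm]
  | _, _, f, app M N, w => by
      simp only [map_app, mem_fv_app, mem_fv_map f M w, mem_fv_map f N w]
      constructor
      · rintro (⟨v,h1,h2⟩|⟨v,h1,h2⟩) <;> exact ⟨v, by simp [h1], h2⟩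
      · rintro ⟨v, h1 | h1, h2⟩
        · exact Or.inl ⟨v, h1, h2⟩
        · exact Or.inr ⟨v, h1, h2⟩
  | _, _, f, lam B, w => by
      simp only [map_lam, mem_fv_lam, mem_fv_map (Option.map f) B (some w)]
      constructor
      · rintro ⟨o, ho, h⟩
        cases o with
        | none => simp at h
        | some v => exact ⟨v, ho, by simpa using h⟩
      · rintro ⟨v, hv, h⟩
        exact ⟨some v, hv, by simp [h]⟩

theorem mem_fv_bind : ∀ {V W : Type u} (f : V → Term W) (M : Term V) (w : W),
    w ∈ fv (bind f M) ↔ ∃ v ∈ fv M, w ∈ fv (f v)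
  | _, _, f, var v, w => by simp
  | _, _, f, app M N, w => by
      simp only [bind_app, mem_fv_app, mem_fv_bind f M w, mem_fv_bind f N w]
      constructor
      · rintro (⟨v,h1,h2⟩|⟨v,h1,h2⟩) <;> exact ⟨v, by simp [h1], h2⟩
      · rintro ⟨v, h1 | h1, h2⟩
        · exact Or.inl ⟨v, h1, h2⟩
        · exact Or.inr ⟨v, h1, h2⟩
  | _, _, f, lam B, w => by
      simp only [bind_lam, mem_fv_lam, mem_fv_bind (up f) B (some w)]
      constructor
      · rintro ⟨o, ho, h⟩
        cases o with
        | none => simp [up, fv] at h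
        | some v =>
            refine ⟨v, ho, ?_⟩
            simp only [up, Option.elim] at h
            rw [mem_fv_map] at h
            obtain ⟨u, hu, hh⟩ := h
            cases hh; exact hu
      · rintro ⟨v, hv, h⟩
        exact ⟨some v, hv, by simp only [up, Option.elim]; rw [mem_fv_map]; exact ⟨w, h, rfl⟩⟩

theorem fv_finite : ∀ {V : Type u} (M : Term V), (fv M).Finite
  | _, var v => by simp [fv]
  | _, app M N => (fv_finite M).union (fv_finite N)
  | _, lam B => by
      have : fv (lam B) = some ⁻¹' fv B := rfl
      rw [this]
      exact (fv_finite B).preimage (Set.injOn_of_injective (Option.some_injective _))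

theorem map_inj : ∀ {V W : Type u} {f : V → W}, Function.Injective f →
    ∀ {M N : Term V}, map f M = map f N → M = N
  | _, _, f, hf, var v, var w => by simp; exact fun h => hf h
  | _, _, f, hf, var v, app _ _ => by simp
  | _, _, f, hf, var v, lam _ => by simp
  | _, _, f, hf, app _ _, var _ => by simp
  | _, _, f, hf, app M N, app M' N' => by
      intro h
      simp only [map_app, app.injEq] at h
      simp [map_inj hf h.1, map_inj hf h.2]
  | _, _, f, hf, app _ _, lam _ => by simp
  | _, _, f, hf, lam _, var _ => by simp
  | _, _, f, hf, lam _, app _ _ => by simp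
  | _, _, f, hf, lam B, lam B' => by
      intro h
      simp only [map_lam, lam.injEq] at h
      simp [map_inj (Option.map_injective hf) h]

theorem exists_preimage : ∀ {V W : Type u} (f : V → W) (M : Term W),
    fv M ⊆ Set.range f → ∃ N : Term V, M = map f N
  | _, _, f, var w, h => by
      obtain ⟨v, hv⟩ := h (by simp : w ∈ fv (var w))
      exact ⟨var v, by simp [hv]⟩
  | _, _, f, app M N, h => by
      obtain ⟨M', hM'⟩ := exists_preimage f M (fun w hw => h (by simp [hw]))
      obtain ⟨N', hN'⟩ := exists_preimage f N (fun w hw => h (by simp [hw]))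
      exact ⟨app M' N', by simp [hM', hN']⟩
  | _, _, f, lam B, h => by
      have hsub : fv B ⊆ Set.range (Option.map f) := by
        rintro (_ | w) hw
        · exact ⟨none, rfl⟩
        · obtain ⟨v, hv⟩ := h (hw : w ∈ fv (lam B))
          exact ⟨some v, by simp [hv]⟩
      obtain ⟨B', hB'⟩ := exists_preimage (Option.map f) B hsub
      exact ⟨lam B', by simp [hB']⟩

end Term

/-! ### Instantiation algebra -/

namespace Term

theorem map_instantiate {V W : Type} (f : V → W) (B : Term (Option V)) (P : Term V) :
    map f (instantiate B P) = instantiate (map (Option.map f) B) (map f P) := by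
  unfold instantiate
  rw [map_bind, bind_map]
  exact bind_congr B (fun o _ => by cases o <;> rfl)

theorem bind_instantiate {V W : Type} (h : V → Term W) (B : Term (Option V)) (P : Term V) :
    bind h (instantiate B P) = instantiate (bind (up h) B) (bind h P) := by
  unfold instantiate
  rw [bind_bind, bind_bind]
  refine bind_congr B (fun o _ => ?_)
  cases o with
  | none => rfl
  | some v => simp only [up, Option.elim, bind_map]; exact (bind_var _).symm

theorem instantiate_map_some {V : Type} (M : Term V) (P : Term V) :
    instantiate (map some M) P = M := by
  unfold instantiate; rw [bind_map]; exact bind_var M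

theorem instantiate_map_some' {V : Type} (A : Term (Option V)) :
    instantiate (map (Option.map some) A) (var none) = A := by
  unfold instantiate; rw [bind_map]
  rw [bind_congr A (g := var) (fun o _ => by cases o <;> rfl)]
  exact bind_var A

theorem bind_of_fv_empty {V W : Type} (h : V → Term W) (g : V → Term W) (M : Term V)
    (hM : fv M = ∅) : bind h M = bind g M :=
  bind_congr M (fun v hv => by rw [hM] at hv; exact absurd hv (Set.notMem_empty v))

theorem map_of_closed {V : Type} (f : V → V) (M : Term V) (hM : fv M = ∅) :
    map f M = M := by
  rw [map_congr M (g := fun v => v) (fun v hv => by rw [hM] at hv; exact absurd hv (Set.notMem_empty v)), map_id]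

theorem bind_of_closed {V : Type} (h : V → Term V) (M : Term V) (hM : fv M = ∅) :
    bind h M = M := by
  rw [bind_of_fv_empty h var M hM, bind_var]

theorem map_of_closed' {V W : Type} (f g : V → W) (M : Term V) (hM : fv M = ∅) :
    map f M = map g M :=
  map_congr M (fun v hv => by rw [hM] at hv; exact absurd hv (Set.notMem_empty v))

end Term

open Term

/-! ### De Bruijn style one-step reduction -/

/-- De Bruijn-style one-step β- (and, if `b = true`, η-) reduction. -/
inductive SD (b : Bool) : {W : Type} → Term W → Term W → Prop
  | beta {W : Type} (B : Term (Option W)) (P : Term W) :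
      SD b (app (lam B) P) (instantiate B P)
  | eta {W : Type} (M : Term W) (hb : b = true) :
      SD b (lam (app (map some M) (var none))) M
  | appL {W : Type} {M M' N : Term W} : SD b M M' → SD b (app M N) (app M' N)
  | appR {W : Type} {M N N' : Term W} : SD b N N' → SD b (app M N) (app M N')
  | lam {W : Type} {B B' : Term (Option W)} : SD b B B' → SD b (lam B) (lam B')

/-- `R` and `b` fit together. -/
def Fits {V : Type} (R : Term V → Term V → Prop) (b : Bool) : Prop :=
  (R = @Beta V ∧ b = false) ∨ (R = @BetaEta V ∧ b = true)

theorem sd_fv {b : Bool} : ∀ {W : Type} {M N : Term W}, SD b M N → fv N ⊆ fv M := by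
  intro W M N d
  induction d with
  | beta B P =>
      intro w hw
      rw [instantiate, mem_fv_bind] at hw
      obtain ⟨o, ho, hw⟩ := hw
      cases o with
      | none =>
          simp only [Option.elim] at hw
          exact (mem_fv_app _ _ _).2 (Or.inr hw)
      | some v =>
          simp only [Option.elim, mem_fv_var] at hw
          subst hw
          exact (mem_fv_app _ _ _).2 (Or.inl ho)
  | eta M hb =>
      intro w hw
      simp only [mem_fv_lam, mem_fv_app]
      exact Or.inl ((mem_fv_map some M (some w)).2 ⟨w, hw, rfl⟩)
  | appL _ ih => intro w hw; rcases (mem_fv_app _ _ _).1 hw with h | h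
                 · exact (mem_fv_app _ _ _).2 (Or.inl (ih h))
                 · exact (mem_fv_app _ _ _).2 (Or.inr h)
  | appR _ ih => intro w hw; rcases (mem_fv_app _ _ _).1 hw with h | h
                 · exact (mem_fv_app _ _ _).2 (Or.inl h)
                 · exact (mem_fv_app _ _ _).2 (Or.inr (ih h))
  | lam _ ih => intro w hw; exact ih hw

theorem SD.map {b : Bool} : ∀ {W : Type} {M N : Term W}, SD b M N →
    ∀ {X : Type} (f : W → X), SD b (map f M) (map f N) := by
  intro W M N d
  induction d with
  | beta B P =>
      intro X f
      rw [map_instantiate]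
      exact SD.beta _ _
  | eta M hb =>
      intro X f
      have : Term.map (Option.map f) (Term.map some M) = Term.map some (Term.map f M) := by
        rw [map_map, map_map]; exact map_congr M (fun v _ => rfl)
      simpa [this] using SD.eta (Term.map f M) hb
  | appL _ ih => intro X f; exact SD.appL (ih f)
  | appR _ ih => intro X f; exact SD.appR (ih f)
  | lam _ ih => intro X f; exact SD.lam (ih (Option.map f))

theorem sd_map_rev {b : Bool} : ∀ {W : Type} {A Z : Term W}, SD b A Z →
    ∀ {X : Type} (f : X → W), Function.Injective f → ∀ (M : Term X), A = map f M →
      ∃ N, Z = map f N ∧ SD b M N := by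
  intro W A Z d
  induction d with
  | beta B P =>
      intro X f hf M hA
      cases M with
      | var v => simp at hA
      | lam B₀ => simp at hA
      | app M₁ M₂ =>
          simp only [map_app, app.injEq] at hA
          obtain ⟨h1, h2⟩ := hA
          cases M₁ with
          | var v => simp at h1
          | app _ _ => simp at h1
          | lam B₀ =>
              simp only [map_lam, lam.injEq] at h1
              refine ⟨instantiate B₀ M₂, ?_, SD.beta _ _⟩
              rw [map_instantiate, h1, h2]
  | eta M₀ hb =>
      intro X f hf M hA
      cases M with
      | var v => simp at hA
      | app _ _ => simp at hA
      | lam B₀ =>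
          simp only [map_lam, lam.injEq] at hA
          cases B₀ with
          | var o => simp at hA
          | lam _ => simp at hA
          | app C₁ C₂ =>
              simp only [map_app, app.injEq] at hA
              obtain ⟨h1, h2⟩ := hA
              cases C₂ with
              | app _ _ => simp at h2
              | lam _ => simp at h2
              | var o =>
                  simp only [map_var, var.injEq] at h2
                  cases o with
                  | some u => simp at h2
                  | none =>
                  have hC₁ : ∃ N₀, C₁ = Term.map some N₀ := by
                    apply exists_preimage
                    intro o ho
                    cases o with
                    | some u => exact ⟨u, rfl⟩
                    | none =>
                        exfalso
                        have : none ∈ fv (Term.map (Option.map f) C₁) :=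
                          (mem_fv_map _ _ _).2 ⟨none, ho, rfl⟩
                        rw [← h1, mem_fv_map] at this
                        obtain ⟨v, _, hv⟩ := this
                        simp at hv
                  obtain ⟨N₀, rfl⟩ := hC₁
                  have key : Term.map some M₀ = Term.map some (Term.map f N₀) := by
                    rw [h1, map_map, map_map]
                    exact map_congr N₀ (fun v _ => rfl)
                  exact ⟨N₀, map_inj (Option.some_injective _) key, SD.eta N₀ hb⟩
  | appL d ih =>
      intro X f hf M hA
      cases M with
      | var v => simp at hA
      | lam _ => simp at hA
      | app M₁ M₂ =>
          simp only [map_app, app.injEq] at hA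
          obtain ⟨N₁, hN₁, hd⟩ := ih f hf M₁ hA.1
          exact ⟨app N₁ M₂, by simp [hN₁, hA.2], SD.appL hd⟩
  | appR d ih =>
      intro X f hf M hA
      cases M with
      | var v => simp at hA
      | lam _ => simp at hA
      | app M₁ M₂ =>
          simp only [map_app, app.injEq] at hA
          obtain ⟨N₂, hN₂, hd⟩ := ih f hf M₂ hA.2
          exact ⟨app M₁ N₂, by simp [hN₂, hA.1], SD.appR hd⟩
  | lam d ih =>
      intro X f hf M hA
      cases M with
      | var v => simp at hA
      | app _ _ => simp at hA
      | lam B₀ =>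
          simp only [map_lam, lam.injEq] at hA
          obtain ⟨N₀, hN₀, hd⟩ := ih (Option.map f) (Option.map_injective hf) B₀ hA
          exact ⟨lam N₀, by simp [hN₀], SD.lam hd⟩

/-- A variant of `Step` whose `abs` rule avoids the variable `y`. -/
inductive StepY {V : Type} (Q : Term V → Term V → Prop) (y : V) : Term V → Term V → Prop
  | base {M N : Term V} : Q M N → StepY Q y M N
  | appL {M M' N : Term V} : StepY Q y M M' → StepY Q y (Term.app M N) (Term.app M' N)
  | appR {M N N' : Term V} : StepY Q y N N' → StepY Q y (Term.app M N) (Term.app M N')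
  | abs (v : V) (hv : v ≠ y) {M M' : Term V} :
      StepY Q y M M' → StepY Q y (Term.abs v M) (Term.abs v M')

theorem stepY_step {V : Type} {Q : Term V → Term V → Prop} {y : V} {M N : Term V}
    (h : StepY Q y M N) : Step Q M N := by
  induction h with
  | base h => exact Step.base h
  | appL _ ih => exact Step.appL ih
  | appR _ ih => exact Step.appR ih
  | abs v hv _ ih => exact Step.abs v ih

theorem fresh_exists {V : Type} [Infinite V] {s : Set V} (hs : s.Finite) : ∃ v, v ∉ s := by
  have := hs.infinite_compl
  obtain ⟨v, hv⟩ := this.nonempty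
  exact ⟨v, hv⟩

theorem step_sd {V : Type} {R : Term V → Term V → Prop} {b : Bool} (hF : Fits R b) :
    ∀ {M N : Term V}, Step R M N → SD b M N := by
  intro M N h
  induction h with
  | base r =>
      rcases hF with ⟨rfl, rfl⟩ | ⟨rfl, rfl⟩
      · obtain ⟨B, P, rfl, rfl⟩ := r
        exact SD.beta B P
      · rcases r with ⟨B, P, rfl, rfl⟩ | rB
        · exact SD.beta B P
        · rw [rB]; exact SD.eta _ rfl
  | appL _ ih => exact SD.appL ih
  | appR _ ih => exact SD.appR ih
  | abs v _ ih => exact SD.lam (ih.map _)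

/-- Key transfer: a de Bruijn step, renamed into `V`, is a named `StepY` step. -/
theorem sd_stepY {V : Type} [Infinite V] {R Q : Term V → Term V → Prop} {b : Bool}
    (hF : Fits R b) (y : V) (hQ : ∀ {M N : Term V}, R M N → Q M N) :
    ∀ {W : Type} {A A' : Term W}, SD b A A' → ∀ (τ : W → V),
      StepY Q y (map τ A) (map τ A') := by
  intro W A A' d
  induction d with
  | beta B P =>
      intro τ
      rw [map_instantiate]
      refine StepY.base (hQ ?_)
      rcases hF with ⟨rfl, _⟩ | ⟨rfl, _⟩
      · exact ⟨_, _, by simp, rfl⟩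
      · exact Or.inl ⟨_, _, by simp, rfl⟩
  | eta M hb =>
      intro τ
      have hR : R = @BetaEta V := by
        rcases hF with ⟨rfl, rfl⟩ | ⟨rfl, _⟩
        · exact absurd hb (by simp)
        · rfl
      refine StepY.base (hQ ?_)
      rw [hR]
      refine Or.inr ?_
      show _ = Term.lam (Term.app (Term.map some _) (Term.var none))
      simp only [map_lam, map_app, map_var]
      rw [map_map, map_map]
      rfl
  | appL _ ih => intro τ; exact StepY.appL (ih τ)
  | appR _ ih => intro τ; exact StepY.appR (ih τ)
  | @lam W B B' d ih =>
      intro τ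
      obtain ⟨v, hv⟩ := fresh_exists (s := {y} ∪ (fun w => τ w) '' {w | some w ∈ fv B}
          ∪ (fun w => τ w) '' {w | some w ∈ fv B'}) (by
        refine ((Set.finite_singleton y).union ?_).union ?_
        · exact Set.Finite.image _ ((fv_finite B).preimage
            (Set.injOn_of_injective (Option.some_injective _)))
        · exact Set.Finite.image _ ((fv_finite B').preimage
            (Set.injOn_of_injective (Option.some_injective _))))
      simp only [Set.mem_union, Set.mem_singleton_iff, Set.mem_image, not_or] at hv
      obtain ⟨⟨hvy, hvB⟩, hvB'⟩ := hv
      have habs : ∀ (C : Term (Option W)), (¬ ∃ w, some w ∈ fv C ∧ τ w = v) →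
          Term.abs v (map (fun o => Option.elim o v τ) C) = map τ (lam C) := by
        intro C hC
        show Term.lam _ = _
        simp only [map_lam]
        congr 1
        rw [map_map]
        refine map_congr C (fun o ho => ?_)
        cases o with
        | none => simp
        | some w =>
            have : τ w ≠ v := fun hh => hC ⟨w, ho, hh⟩
            simp [Option.elim, this]
      rw [← habs B (by push_neg at hvB ⊢; exact fun w hw => hvB w hw),
          ← habs B' (by push_neg at hvB' ⊢; exact fun w hw => hvB' w hw)]
      exact StepY.abs v hvy (ih _)

theorem sd_step {V : Type} [Infinite V] {R : Term V → Term V → Prop} {b : Bool}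
    (hF : Fits R b) {A A' : Term V} (d : SD b A A') : Step R A A' := by
  have hy : Nonempty V := inferInstance
  obtain ⟨y⟩ := hy
  have := sd_stepY (Q := R) hF y (fun h => h) d (fun v => v)
  rw [map_id, map_id] at this
  exact stepY_step this

/-! ### Parallel reduction and confluence -/

namespace Term
@[simp] theorem instantiate_app {V : Type} (X Y : Term (Option V)) (P : Term V) :
    instantiate (app X Y) P = app (instantiate X P) (instantiate Y P) := rfl
@[simp] theorem instantiate_var_none {V : Type} (P : Term V) :
    instantiate (var none) P = P := rfl

/-- Size of a term. -/
def size : {W : Type} → Term W → ℕ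
  | _, var _ => 1
  | _, app M N => size M + size N + 1
  | _, lam B => size B + 1

@[simp] theorem size_var {W : Type} (v : W) : size (var v) = 1 := rfl
@[simp] theorem size_app {W : Type} (M N : Term W) : size (app M N) = size M + size N + 1 := rfl
@[simp] theorem size_lam {W : Type} (B : Term (Option W)) : size (lam B) = size B + 1 := rfl

theorem size_map : ∀ {W X : Type} (f : W → X) (M : Term W), size (map f M) = size M
  | _, _, f, var v => rfl
  | _, _, f, app M N => by simp [size_map f M, size_map f N]
  | _, _, f, lam B => by simp [size_map (Option.map f) B]

end Term

/-- Parallel β(η)-reduction. -/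
inductive Par (b : Bool) : {W : Type} → Term W → Term W → Prop
  | var {W : Type} (v : W) : Par b (var v) (var v)
  | app {W : Type} {M M' N N' : Term W} :
      Par b M M' → Par b N N' → Par b (app M N) (app M' N')
  | lam {W : Type} {B B' : Term (Option W)} : Par b B B' → Par b (lam B) (lam B')
  | beta {W : Type} {B B' : Term (Option W)} {P P' : Term W} :
      Par b B B' → Par b P P' → Par b (app (lam B) P) (instantiate B' P')
  | eta {W : Type} {M M' : Term W} (hb : b = true) :
      Par b M M' → Par b (lam (app (map some M) (var none))) M'

theorem par_refl {b : Bool} : ∀ {W : Type} (M : Term W), Par b M M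
  | _, var v => Par.var v
  | _, app M N => Par.app (par_refl M) (par_refl N)
  | _, lam B => Par.lam (par_refl B)

theorem Par.map {b : Bool} : ∀ {W : Type} {M N : Term W}, Par b M N →
    ∀ {X : Type} (f : W → X), Par b (map f M) (map f N) := by
  intro W M N d
  induction d with
  | var v => intro X f; exact par_refl _
  | app _ _ ih₁ ih₂ => intro X f; exact Par.app (ih₁ f) (ih₂ f)
  | lam _ ih => intro X f; exact Par.lam (ih (Option.map f))
  | beta _ _ ih₁ ih₂ =>
      intro X f
      rw [map_app, map_lam, map_instantiate]
      exact Par.beta (ih₁ (Option.map f)) (ih₂ f)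
  | @eta W₀ M₀ M₀' hb hpar ih =>
      intro X f
      have heq : Term.map (Option.map f) (Term.map some M₀) = Term.map some (Term.map f M₀) := by
        rw [map_map, map_map]; exact map_congr M₀ (fun v _ => rfl)
      have := Par.eta (M := Term.map f M₀) (M' := Term.map f M₀') hb (ih f)
      simpa [heq] using this

theorem par_up {b : Bool} {W X : Type} {h h' : W → Term X}
    (hp : ∀ v, Par b (h v) (h' v)) : ∀ o, Par b (Term.up h o) (Term.up h' o) := by
  intro o
  cases o with
  | none => exact par_refl _
  | some v => exact (hp v).map some

theorem par_bind {b : Bool} : ∀ {W : Type} {M M' : Term W}, Par b M M' →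
    ∀ {X : Type} (h h' : W → Term X), (∀ v, Par b (h v) (h' v)) →
      Par b (bind h M) (bind h' M') := by
  intro W M M' d
  induction d with
  | var v => intro X h h' hp; exact hp v
  | app _ _ ih₁ ih₂ => intro X h h' hp; exact Par.app (ih₁ h h' hp) (ih₂ h h' hp)
  | lam _ ih => intro X h h' hp; exact Par.lam (ih _ _ (par_up hp))
  | beta _ _ ih₁ ih₂ =>
      intro X h h' hp
      rw [bind_app, bind_lam, bind_instantiate]
      exact Par.beta (ih₁ _ _ (par_up hp)) (ih₂ h h' hp)
  | @eta W₀ M₀ M₀' hb hpar ih =>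
      intro X h h' hp
      have heq : bind (Term.up h) (Term.map some M₀) = Term.map some (bind h M₀) := by
        rw [bind_map, map_bind]
        exact bind_congr M₀ (fun v _ => rfl)
      rw [bind_lam, bind_app, heq]
      have hb2 : bind (Term.up h) (var (none : Option W₀)) = var none := rfl
      rw [hb2]
      exact Par.eta hb (ih h h' hp)

theorem par_instantiate {b : Bool} {W : Type} {B B' : Term (Option W)} {P P' : Term W}
    (h₁ : Par b B B') (h₂ : Par b P P') :
    Par b (instantiate B P) (instantiate B' P') := by
  unfold instantiate
  refine par_bind h₁ _ _ (fun o => ?_)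
  cases o with
  | none => exact h₂
  | some v => exact par_refl _

theorem par_map_rev {b : Bool} : ∀ {W : Type} {A Z : Term W}, Par b A Z →
    ∀ {X : Type} (f : X → W), Function.Injective f → ∀ (M : Term X), A = map f M →
      ∃ N, Z = map f N ∧ Par b M N := by
  intro W A Z d
  induction d with
  | var v =>
      intro X f hf M hA
      exact ⟨M, hA, par_refl M⟩
  | app _ _ ih₁ ih₂ =>
      intro X f hf M hA
      cases M with
      | var v => simp at hA
      | lam _ => simp at hA
      | app M₁ M₂ =>
          simp only [map_app, app.injEq] at hA
          obtain ⟨N₁, hN₁, hd₁⟩ := ih₁ f hf M₁ hA.1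
          obtain ⟨N₂, hN₂, hd₂⟩ := ih₂ f hf M₂ hA.2
          exact ⟨app N₁ N₂, by simp [hN₁, hN₂], Par.app hd₁ hd₂⟩
  | lam _ ih =>
      intro X f hf M hA
      cases M with
      | var v => simp at hA
      | app _ _ => simp at hA
      | lam B₀ =>
          simp only [map_lam, lam.injEq] at hA
          obtain ⟨N₀, hN₀, hd⟩ := ih (Option.map f) (Option.map_injective hf) B₀ hA
          exact ⟨lam N₀, by simp [hN₀], Par.lam hd⟩
  | beta _ _ ih₁ ih₂ =>
      intro X f hf M hA
      cases M with
      | var v => simp at hA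
      | lam _ => simp at hA
      | app M₁ M₂ =>
          simp only [map_app, app.injEq] at hA
          obtain ⟨h1, h2⟩ := hA
          cases M₁ with
          | var v => simp at h1
          | app _ _ => simp at h1
          | lam B₀ =>
              simp only [map_lam, lam.injEq] at h1
              obtain ⟨B₀', hB₀', hd₁⟩ := ih₁ (Option.map f) (Option.map_injective hf) B₀ h1
              obtain ⟨N₂, hN₂, hd₂⟩ := ih₂ f hf M₂ h2
              refine ⟨instantiate B₀' N₂, ?_, Par.beta hd₁ hd₂⟩
              rw [map_instantiate, hB₀', hN₂]
  | @eta W₀ M₀ M₀' hb hpar ih =>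
      intro X f hf M hA
      cases M with
      | var v => simp at hA
      | app _ _ => simp at hA
      | lam B₀ =>
          simp only [map_lam, lam.injEq] at hA
          cases B₀ with
          | var o => simp at hA
          | lam _ => simp at hA
          | app C₁ C₂ =>
              simp only [map_app, app.injEq] at hA
              obtain ⟨h1, h2⟩ := hA
              cases C₂ with
              | app _ _ => simp at h2
              | lam _ => simp at h2
              | var o =>
                  simp only [map_var, var.injEq] at h2
                  cases o with
                  | some u => simp at h2
                  | none =>
                  have hC₁ : ∃ N₀, C₁ = Term.map some N₀ := by
                    apply exists_preimage
                    intro o ho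
                    cases o with
                    | some u => exact ⟨u, rfl⟩
                    | none =>
                        exfalso
                        have : none ∈ fv (Term.map (Option.map f) C₁) :=
                          (mem_fv_map _ _ _).2 ⟨none, ho, rfl⟩
                        rw [← h1, mem_fv_map] at this
                        obtain ⟨v, _, hv⟩ := this
                        simp at hv
                  obtain ⟨N₀, rfl⟩ := hC₁
                  have key : Term.map some M₀ = Term.map some (Term.map f N₀) := by
                    rw [h1, map_map, map_map]
                    exact map_congr N₀ (fun v _ => rfl)
                  have hM₀ : M₀ = Term.map f N₀ := map_inj (Option.some_injective _) key
                  subst hM₀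
                  obtain ⟨N₁, hN₁, hd⟩ := ih f hf N₀ rfl
                  exact ⟨N₁, hN₁, Par.eta hb hd⟩

/-! ### Complete developments and the diamond property -/

/-- Takahashi's complete development, as a relation. -/
inductive Cd (b : Bool) : {W : Type} → Term W → Term W → Prop
  | var {W : Type} (v : W) : Cd b (var v) (var v)
  | app {W : Type} {M M' N N' : Term W} (hnl : ∀ B, M ≠ lam B) :
      Cd b M M' → Cd b N N' → Cd b (app M N) (app M' N')
  | beta {W : Type} {B B' : Term (Option W)} {P P' : Term W} :
      Cd b B B' → Cd b P P' → Cd b (app (lam B) P) (instantiate B' P')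
  | lam {W : Type} {B B' : Term (Option W)}
      (hp : b = true → ∀ M, B ≠ app (map some M) (var none)) :
      Cd b B B' → Cd b (lam B) (lam B')
  | eta {W : Type} {M M' : Term W} (hb : b = true) :
      Cd b M M' → Cd b (lam (app (map some M) (var none))) M'

theorem cd_total {b : Bool} : ∀ (n : ℕ) {W : Type} (M : Term W), size M < n →
    ∃ N, Cd b M N := by
  intro n
  induction n with
  | zero => intro W M h; omega
  | succ n ih =>
      intro W M h
      cases M with
      | var v => exact ⟨var v, Cd.var v⟩
      | app M₁ M₂ =>
          simp only [size_app] at h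
          obtain ⟨N₂, hN₂⟩ := ih M₂ (by omega)
          cases M₁ with
          | var v =>
              obtain ⟨N₁, hN₁⟩ := ih (var v) (by simp at h ⊢; omega)
              exact ⟨app N₁ N₂, Cd.app (by simp) hN₁ hN₂⟩
          | app A B =>
              obtain ⟨N₁, hN₁⟩ := ih (app A B) (by simp at h ⊢; omega)
              exact ⟨app N₁ N₂, Cd.app (by simp) hN₁ hN₂⟩
          | lam B =>
              obtain ⟨B', hB'⟩ := ih B (by simp at h; omega)
              exact ⟨instantiate B' N₂, Cd.beta hB' hN₂⟩
      | lam B =>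
          simp only [size_lam] at h
          by_cases hpat : b = true ∧ ∃ M₀, B = app (map some M₀) (var none)
          · obtain ⟨hb, M₀, rfl⟩ := hpat
            obtain ⟨N₀, hN₀⟩ := ih M₀ (by simp [size_map] at h ⊢; omega)
            exact ⟨N₀, Cd.eta hb hN₀⟩
          · obtain ⟨B', hB'⟩ := ih B (by omega)
            refine ⟨lam B', Cd.lam ?_ hB'⟩
            intro hb M₀ hM₀
            exact hpat ⟨hb, M₀, hM₀⟩

theorem cd_map_rev {b : Bool} : ∀ {W : Type} {A Z : Term W}, Cd b A Z →
    ∀ {X : Type} (f : X → W), Function.Injective f → ∀ (M : Term X), A = map f M →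
      ∃ N, Z = map f N ∧ Cd b M N := by
  intro W A Z d
  induction d with
  | var v =>
      intro X f hf M hA
      cases M with
      | var w => exact ⟨var w, hA, Cd.var w⟩
      | app _ _ => simp at hA
      | lam _ => simp at hA
  | app hnl _ _ ih₁ ih₂ =>
      intro X f hf M hA
      cases M with
      | var v => simp at hA
      | lam _ => simp at hA
      | app M₁ M₂ =>
          simp only [map_app, app.injEq] at hA
          obtain ⟨N₁, hN₁, hd₁⟩ := ih₁ f hf M₁ hA.1
          obtain ⟨N₂, hN₂, hd₂⟩ := ih₂ f hf M₂ hA.2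
          refine ⟨app N₁ N₂, by simp [hN₁, hN₂], Cd.app ?_ hd₁ hd₂⟩
          intro B hB
          subst hB
          exact hnl _ hA.1
  | beta _ _ ih₁ ih₂ =>
      intro X f hf M hA
      cases M with
      | var v => simp at hA
      | lam _ => simp at hA
      | app M₁ M₂ =>
          simp only [map_app, app.injEq] at hA
          obtain ⟨h1, h2⟩ := hA
          cases M₁ with
          | var v => simp at h1
          | app _ _ => simp at h1
          | lam B₀ =>
              simp only [map_lam, lam.injEq] at h1
              obtain ⟨B₀', hB₀', hd₁⟩ := ih₁ (Option.map f) (Option.map_injective hf) B₀ h1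
              obtain ⟨N₂, hN₂, hd₂⟩ := ih₂ f hf M₂ h2
              refine ⟨instantiate B₀' N₂, ?_, Cd.beta hd₁ hd₂⟩
              rw [map_instantiate, hB₀', hN₂]
  | @lam W₀ B B' hp _ ih =>
      intro X f hf M hA
      cases M with
      | var v => simp at hA
      | app _ _ => simp at hA
      | lam B₀ =>
          simp only [map_lam, lam.injEq] at hA
          obtain ⟨N₀, hN₀, hd⟩ := ih (Option.map f) (Option.map_injective hf) B₀ hA
          refine ⟨lam N₀, by simp [hN₀], Cd.lam ?_ hd⟩
          intro hb M₀ hM₀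
          apply hp hb (Term.map f M₀)
          rw [hA, hM₀, map_app, map_var]
          have h1 : Term.map (Option.map f) (Term.map some M₀) = Term.map some (Term.map f M₀) := by
            rw [map_map, map_map]; exact map_congr M₀ (fun v _ => rfl)
          rw [h1]
          rfl
  | @eta W₀ M₀ M₀' hb hcd ih =>
      intro X f hf M hA
      cases M with
      | var v => simp at hA
      | app _ _ => simp at hA
      | lam B₀ =>
          simp only [map_lam, lam.injEq] at hA
          cases B₀ with
          | var o => simp at hA
          | lam _ => simp at hA
          | app C₁ C₂ =>
              simp only [map_app, app.injEq] at hA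
              obtain ⟨h1, h2⟩ := hA
              cases C₂ with
              | app _ _ => simp at h2
              | lam _ => simp at h2
              | var o =>
                  simp only [map_var, var.injEq] at h2
                  cases o with
                  | some u => simp at h2
                  | none =>
                  have hC₁ : ∃ N₀, C₁ = Term.map some N₀ := by
                    apply Term.exists_preimage
                    intro o ho
                    cases o with
                    | some u => exact ⟨u, rfl⟩
                    | none =>
                        exfalso
                        have : none ∈ Term.fv (Term.map (Option.map f) C₁) :=
                          (Term.mem_fv_map _ _ _).2 ⟨none, ho, rfl⟩
                        rw [← h1, Term.mem_fv_map] at this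
                        obtain ⟨v, _, hv⟩ := this
                        simp at hv
                  obtain ⟨N₀, rfl⟩ := hC₁
                  have key : Term.map some M₀ = Term.map some (Term.map f N₀) := by
                    rw [h1, map_map, map_map]
                    exact map_congr N₀ (fun v _ => rfl)
                  have hM₀ : M₀ = Term.map f N₀ := map_inj (Option.some_injective _) key
                  subst hM₀
                  obtain ⟨N₁, hN₁, hd⟩ := ih f hf N₀ rfl
                  exact ⟨N₁, hN₁, Cd.eta hb hd⟩

/-! ### Inversion lemmas for parallel reduction -/

theorem par_var_inv {b : Bool} {W : Type} {v : W} {P : Term W}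
    (h : Par b (var v) P) : P = var v := by
  cases h; rfl

theorem par_app_inv {b : Bool} {W : Type} {M₁ M₂ P : Term W}
    (h : Par b (app M₁ M₂) P) :
    (∃ P₁ P₂, P = app P₁ P₂ ∧ Par b M₁ P₁ ∧ Par b M₂ P₂) ∨
    (∃ B B' P₂, M₁ = lam B ∧ Par b B B' ∧ Par b M₂ P₂ ∧ P = instantiate B' P₂) := by
  cases h with
  | app h₁ h₂ => exact Or.inl ⟨_, _, rfl, h₁, h₂⟩
  | beta h₁ h₂ => exact Or.inr ⟨_, _, _, rfl, h₁, h₂, rfl⟩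

theorem par_lam_inv {b : Bool} {W : Type} {B : Term (Option W)} {P : Term W}
    (h : Par b (lam B) P) :
    (∃ B₂, P = lam B₂ ∧ Par b B B₂) ∨
    (b = true ∧ ∃ M₀, B = app (map some M₀) (var none) ∧ Par b M₀ P) := by
  cases h with
  | lam h₀ => exact Or.inl ⟨_, rfl, h₀⟩
  | eta hb h₀ => exact Or.inr ⟨hb, _, rfl, h₀⟩

/-- Inversion of a parallel step from an η-pattern body. -/
theorem par_pattern_inv {b : Bool} {W : Type} {Q : Term W} {B₂ : Term (Option W)}
    (h : Par b (app (map some Q) (var none)) B₂) :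
    (∃ Q₁, B₂ = app (map some Q₁) (var none) ∧ Par b Q Q₁) ∨
    (∃ Q₀ Q₀', Q = lam Q₀ ∧ Par b Q₀ Q₀' ∧ B₂ = Q₀') := by
  rcases par_app_inv h with ⟨P₁, P₂, rfl, h₁, h₂⟩ | ⟨C, C', P₂, hC, h₁, h₂, rfl⟩
  · obtain ⟨Q₁, rfl, hQ₁⟩ := par_map_rev h₁ some (Option.some_injective _) Q rfl
    rw [par_var_inv h₂]
    exact Or.inl ⟨Q₁, rfl, hQ₁⟩
  · -- map some Q = lam C
    cases Q with
    | var v => simp at hC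
    | app _ _ => simp at hC
    | lam Q₀ =>
        simp only [map_lam, lam.injEq] at hC
        subst hC
        obtain ⟨Q₀', rfl, hQ₀'⟩ :=
          par_map_rev h₁ (Option.map some) (Option.map_injective (Option.some_injective _)) Q₀ rfl
        rw [par_var_inv h₂, instantiate_map_some']
        exact Or.inr ⟨Q₀, Q₀', rfl, hQ₀', rfl⟩

theorem cd_var_inv {b : Bool} {W : Type} {v : W} {P : Term W}
    (h : Cd b (var v) P) : P = var v := by
  cases h; rfl

theorem cd_app_inv {b : Bool} {W : Type} {M₁ M₂ A : Term W}
    (h : Cd b (app M₁ M₂) A) :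
    (∃ A₁ A₂, A = app A₁ A₂ ∧ Cd b M₁ A₁ ∧ Cd b M₂ A₂) ∨
    (∃ B B' A₂, M₁ = lam B ∧ Cd b B B' ∧ Cd b M₂ A₂ ∧ A = instantiate B' A₂) := by
  cases h with
  | app hnl h₁ h₂ => exact Or.inl ⟨_, _, rfl, h₁, h₂⟩
  | beta h₁ h₂ => exact Or.inr ⟨_, _, _, rfl, h₁, h₂, rfl⟩

/-- Inversion of a complete development of an η-pattern body. -/
theorem cd_pattern_inv {b : Bool} {W : Type} {Q : Term W} {A : Term (Option W)}
    (h : Cd b (app (map some Q) (var none)) A) :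
    (∃ Q₁, A = app (map some Q₁) (var none) ∧ Cd b Q Q₁) ∨
    (∃ Q₀ Q₀', Q = lam Q₀ ∧ Cd b Q₀ Q₀' ∧ A = Q₀') := by
  rcases cd_app_inv h with ⟨A₁, A₂, rfl, h₁, h₂⟩ | ⟨C, C', A₂, hC, h₁, h₂, rfl⟩
  · obtain ⟨Q₁, rfl, hQ₁⟩ := cd_map_rev h₁ some (Option.some_injective _) Q rfl
    rw [cd_var_inv h₂]
    exact Or.inl ⟨Q₁, rfl, hQ₁⟩
  · cases Q with
    | var v => simp at hC
    | app _ _ => simp at hC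
    | lam Q₀ =>
        simp only [map_lam, lam.injEq] at hC
        subst hC
        obtain ⟨Q₀', rfl, hQ₀'⟩ :=
          cd_map_rev h₁ (Option.map some) (Option.map_injective (Option.some_injective _)) Q₀ rfl
        rw [cd_var_inv h₂, instantiate_map_some']
        exact Or.inr ⟨Q₀, Q₀', rfl, hQ₀', rfl⟩

/-! ### The triangle property -/

theorem triangle {b : Bool} : ∀ (n : ℕ) {W : Type} {M P N : Term W}, size M < n →
    Par b M P → Cd b M N → Par b P N := by
  intro n
  induction n with
  | zero => intro W M P N h; omega
  | succ n ih =>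
      intro W M P N hsz hP hC
      cases hC with
      | var v => rw [par_var_inv hP]; exact par_refl _
      | app hnl c₁ c₂ =>
          rcases par_app_inv hP with ⟨P₁, P₂, rfl, h₁, h₂⟩ | ⟨B, B', P₂, hB, _, _, _⟩
          · simp only [size_app] at hsz
            exact Par.app (ih (by omega) h₁ c₁) (ih (by omega) h₂ c₂)
          · exact absurd hB (hnl B)
      | @beta _ B B₁ P₀ N₂ c_B c_P =>
          simp only [size_app, size_lam] at hsz
          rcases par_app_inv hP with ⟨L, P₂, rfl, h₁, h₂⟩ | ⟨C, B₂, P₂, hC, h₁, h₂, rfl⟩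
          · rcases par_lam_inv h₁ with ⟨B₂, rfl, hB₂⟩ | ⟨hb, Q, hpat, hQL⟩
            · exact Par.beta (ih (by omega) hB₂ c_B) (ih (by omega) h₂ c_P)
            · subst hpat
              rcases cd_pattern_inv c_B with ⟨Q₁, rfl, hQ₁⟩ | ⟨Q₀, Q₀', rfl, hQ₀', rfl⟩
              · rw [instantiate_app, instantiate_map_some, instantiate_var_none]
                refine Par.app (ih ?_ hQL hQ₁) (ih (by omega) h₂ c_P)
                simp [size_map] at hsz
                omega
              · -- repackage: M' = app (lam Q₀) P₀
                refine ih (W := W) (M := app (lam Q₀) P₀) ?_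
                  (Par.app hQL h₂) (Cd.beta hQ₀' c_P)
                simp [size_map] at hsz ⊢
                omega
          · -- lam B = lam C
            simp only [lam.injEq] at hC
            subst hC
            exact par_instantiate (ih (by omega) h₁ c_B) (ih (by omega) h₂ c_P)
      | @lam _ B B' hp c =>
          simp only [size_lam] at hsz
          rcases par_lam_inv hP with ⟨B₂, rfl, hB₂⟩ | ⟨hb, M₀, hpat, _⟩
          · exact Par.lam (ih (by omega) hB₂ c)
          · exact absurd hpat (hp hb M₀)
      | @eta _ M₀ N₀ hb c =>
          simp only [size_lam, size_app, size_map] at hsz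
          rcases par_lam_inv hP with ⟨B₂, rfl, hB₂⟩ | ⟨_, M₀', hpat, hM₀'⟩
          · rcases par_pattern_inv hB₂ with ⟨M₁, rfl, hM₁⟩ | ⟨M₀₀, M₀₀', rfl, hM₀₀', rfl⟩
            · exact Par.eta hb (ih (by omega) hM₁ c)
            · exact ih (by simp at hsz ⊢; omega) (Par.lam hM₀₀') c
          · have : M₀' = M₀ := by
              have := hpat
              simp only [app.injEq] at this
              exact map_inj (Option.some_injective _) this.1.symm
            subst this
            exact ih (by omega) hM₀' c

/-! ### Diamond, confluence, Church–Rosser -/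

theorem par_diamond {b : Bool} {W : Type} {M P₁ P₂ : Term W}
    (h₁ : Par b M P₁) (h₂ : Par b M P₂) : ∃ Q, Par b P₁ Q ∧ Par b P₂ Q := by
  obtain ⟨N, hN⟩ := cd_total (b := b) (Term.size M + 1) M (by omega)
  exact ⟨N, triangle (Term.size M + 1) (by omega) h₁ hN,
    triangle (Term.size M + 1) (by omega) h₂ hN⟩

/-- Reflexive-transitive closure of de Bruijn steps. -/
def RedD (b : Bool) {W : Type} : Term W → Term W → Prop :=
  Relation.ReflTransGen (@SD b W)

theorem sd_par {b : Bool} {W : Type} {M N : Term W} (h : SD b M N) : Par b M N := by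
  induction h with
  | beta B P => exact Par.beta (par_refl B) (par_refl P)
  | eta M hb => exact Par.eta hb (par_refl M)
  | appL _ ih => exact Par.app ih (par_refl _)
  | appR _ ih => exact Par.app (par_refl _) ih
  | lam _ ih => exact Par.lam ih

theorem redD_appL {b : Bool} {W : Type} {M M' N : Term W} (h : RedD b M M') :
    RedD b (app M N) (app M' N) := by
  induction h with
  | refl => exact Relation.ReflTransGen.refl
  | tail _ hst ih => exact ih.tail (SD.appL hst)

theorem redD_appR {b : Bool} {W : Type} {M N N' : Term W} (h : RedD b N N') :
    RedD b (app M N) (app M N') := by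
  induction h with
  | refl => exact Relation.ReflTransGen.refl
  | tail _ hst ih => exact ih.tail (SD.appR hst)

theorem redD_app {b : Bool} {W : Type} {M M' N N' : Term W} (h₁ : RedD b M M')
    (h₂ : RedD b N N') : RedD b (app M N) (app M' N') :=
  (redD_appL h₁).trans (redD_appR h₂)

theorem redD_lam {b : Bool} {W : Type} {B B' : Term (Option W)} (h : RedD b B B') :
    RedD b (lam B) (lam B') := by
  induction h with
  | refl => exact Relation.ReflTransGen.refl
  | tail _ hst ih => exact ih.tail (SD.lam hst)

theorem redD_map {b : Bool} {W X : Type} {M M' : Term W} (f : W → X) (h : RedD b M M') :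
    RedD b (map f M) (map f M') := by
  induction h with
  | refl => exact Relation.ReflTransGen.refl
  | tail _ hst ih => exact ih.tail (hst.map f)

theorem par_redD {b : Bool} : ∀ {W : Type} {M N : Term W}, Par b M N → RedD b M N := by
  intro W M N h
  induction h with
  | var v => exact Relation.ReflTransGen.refl
  | app _ _ ih₁ ih₂ => exact redD_app ih₁ ih₂
  | lam _ ih => exact redD_lam ih
  | beta _ _ ih₁ ih₂ => exact ((redD_app (redD_lam ih₁) ih₂).tail (SD.beta _ _))
  | @eta W₀ M₀ M₀' hb _ ih =>
      exact (redD_lam (redD_appL (redD_map some ih))).tail (SD.eta M₀' hb)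

theorem rtg_par_redD {b : Bool} {W : Type} {M N : Term W}
    (h : Relation.ReflTransGen (Par b (W := W)) M N) : RedD b M N := by
  induction h with
  | refl => exact Relation.ReflTransGen.refl
  | tail _ hst ih => exact ih.trans (par_redD hst)

theorem eqvGen_par_join {b : Bool} {W : Type} {A B : Term W}
    (h : Relation.EqvGen (Par b (W := W)) A B) :
    Relation.Join (Relation.ReflTransGen (Par b (W := W))) A B := by
  have hEq := Relation.equivalence_join_reflTransGen (r := Par b (W := W))
    (fun a c d hac had => by
      obtain ⟨q, h₁, h₂⟩ := par_diamond hac had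
      exact ⟨q, Relation.ReflGen.single h₁, Relation.ReflTransGen.single h₂⟩)
  induction h with
  | rel _ _ hr => exact ⟨_, Relation.ReflTransGen.single hr, Relation.ReflTransGen.refl⟩
  | refl a => exact hEq.refl a
  | symm _ _ _ ih => exact hEq.symm ih
  | trans _ _ _ _ _ ih₁ ih₂ => exact hEq.trans ih₁ ih₂

theorem reduced_no_sd {V : Type} [Infinite V] {R : Term V → Term V → Prop} {b : Bool}
    (hF : Fits R b) {N' : Term V} (hn : Reduced R N') : ∀ X, ¬ SD b N' X :=
  fun X hX => hn ⟨X, sd_step hF hX⟩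

/-- Church–Rosser consequence: an `R`-equivalence with a reduced term is a reduction. -/
theorem requiv_to_redD {V : Type} [Infinite V] {R : Term V → Term V → Prop} {b : Bool}
    (hF : Fits R b) {A N' : Term V} (h : REquiv R A N') (hn : Reduced R N') :
    RedD b A N' := by
  have hP : Relation.EqvGen (Par b (W := V)) A N' :=
    Relation.EqvGen.mono (fun M N st => sd_par (step_sd hF st)) A N' h
  obtain ⟨X, h₁, h₂⟩ := eqvGen_par_join hP
  have h₂' : RedD b N' X := rtg_par_redD h₂
  have hXN : X = N' := by
    rcases h₂'.cases_head with heq | ⟨c, hc, _⟩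
    · exact heq.symm
    · exact absurd hc (reduced_no_sd hF hn c)
  subst hXN
  exact rtg_par_redD h₁

/-! ### Reducts of Turing's combinator -/

theorem sd_var_inv {b : Bool} {W : Type} {v : W} {Z : Term W} (h : SD b (var v) Z) : False := by
  cases h

theorem sd_app_inv {b : Bool} {W : Type} {M₁ M₂ Z : Term W} (h : SD b (app M₁ M₂) Z) :
    (∃ B, M₁ = lam B ∧ Z = instantiate B M₂) ∨
    (∃ M₁', Z = app M₁' M₂ ∧ SD b M₁ M₁') ∨
    (∃ M₂', Z = app M₁ M₂' ∧ SD b M₂ M₂') := by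
  cases h with
  | beta B P => exact Or.inl ⟨B, rfl, rfl⟩
  | appL h => exact Or.inr (Or.inl ⟨_, rfl, h⟩)
  | appR h => exact Or.inr (Or.inr ⟨_, rfl, h⟩)

theorem sd_lam_inv {b : Bool} {W : Type} {B : Term (Option W)} {Z : Term W}
    (h : SD b (lam B) Z) :
    (∃ B', Z = lam B' ∧ SD b B B') ∨
    (b = true ∧ ∃ M, B = app (map some M) (var none) ∧ Z = M) := by
  cases h
  case eta =>
    rename_i hb
    exact Or.inr ⟨hb, _, rfl, rfl⟩
  case lam h => exact Or.inl ⟨_, rfl, h⟩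

theorem map_eq_var {V W : Type} {f : V → W} {M : Term V} {w : W}
    (h : Term.map f M = var w) : ∃ v, M = var v ∧ f v = w := by
  cases M with
  | var v => exact ⟨v, rfl, by simpa using h⟩
  | app _ _ => simp at h
  | lam _ => simp at h

theorem thetaHalf_normal {b : Bool} {V : Type} {Z : Term V}
    (h : SD b thetaHalf Z) : False := by
  rcases sd_lam_inv h with ⟨B₁, _, h₁⟩ | ⟨_, M, hpat, _⟩
  · rcases sd_lam_inv h₁ with ⟨B₂, _, h₂⟩ | ⟨_, M, hpat, _⟩
    · rcases sd_app_inv h₂ with ⟨B, hB, _⟩ | ⟨M₁', _, h₃⟩ | ⟨M₂', _, h₃⟩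
      · simp at hB
      · exact sd_var_inv h₃
      · rcases sd_app_inv h₃ with ⟨B, hB, _⟩ | ⟨_, _, h₄⟩ | ⟨_, _, h₄⟩
        · simp at hB
        · rcases sd_app_inv h₄ with ⟨B, hB, _⟩ | ⟨_, _, h₅⟩ | ⟨_, _, h₅⟩
          · simp at hB
          · exact sd_var_inv h₅
          · exact sd_var_inv h₅
        · exact sd_var_inv h₄
    · simp at hpat
  · simp at hpat

/-- The body shape of a one-step reduct of `Θ`. -/
theorem theta_step {b : Bool} {V : Type} {Z : Term V} (h : SD b Theta Z) :
    Z = lam (app (var none) (app (map some Theta) (var none))) := by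
  rcases sd_app_inv h with ⟨B, hB, hZ⟩ | ⟨M₁', _, h₁⟩ | ⟨M₂', _, h₁⟩
  · have : B = lam (app (var none)
        (app (app (var (some none)) (var (some none))) (var none))) := by
      have := hB
      simp only [thetaHalf, lam.injEq] at this
      exact this.symm
    subst this
    rw [hZ]
    rfl
  · exact absurd h₁ thetaHalf_normal
  · exact absurd h₁ thetaHalf_normal

/-- Bodies of λ-abstraction reducts of `Θ`. -/
inductive AA {V : Type} : Term (Option V) → Prop
  | a1T : AA (app (var none) (app (map some Theta) (var none)))
  | a1L {A : Term (Option V)} : AA A →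
      AA (app (var none) (app (map some (lam A)) (var none)))
  | a2 {A : Term (Option V)} : AA A → AA (app (var none) A)

/-- The set of reducts of `Θ`. -/
def DD {V : Type} (T : Term V) : Prop := T = Theta ∨ ∃ A, AA A ∧ T = lam A

theorem aa_not_pattern {V : Type} {A : Term (Option V)} (hA : AA A) :
    ∀ M, A ≠ app (map some M) (var none) := by
  intro M hM
  have : ∃ X, A = app (var (none : Option V)) X := by
    cases hA with
    | a1T => exact ⟨_, rfl⟩
    | a1L _ => exact ⟨_, rfl⟩
    | a2 _ => exact ⟨_, rfl⟩
  obtain ⟨X, rfl⟩ := this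
  simp only [app.injEq] at hM
  obtain ⟨v, _, hv⟩ := map_eq_var hM.1.symm
  simp at hv

theorem aa_step {b : Bool} {V : Type} {A A' : Term (Option V)}
    (hA : AA A) (h : SD b A A') : AA A' := by
  induction hA generalizing A' with
  | a1T =>
      rcases sd_app_inv h with ⟨B, hB, _⟩ | ⟨_, _, h₁⟩ | ⟨X, rfl, h₁⟩
      · simp at hB
      · exact absurd h₁ sd_var_inv
      · rcases sd_app_inv h₁ with ⟨B, hB, _⟩ | ⟨Q, rfl, h₂⟩ | ⟨_, rfl, h₂⟩
        · simp [Theta] at hB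
        · obtain ⟨T₁, rfl, h₃⟩ := sd_map_rev h₂ some (Option.some_injective _) Theta rfl
          rw [theta_step h₃]
          exact AA.a1L AA.a1T
        · exact absurd h₂ sd_var_inv
  | @a1L A₀ hA₀ ih =>
      rcases sd_app_inv h with ⟨B, hB, _⟩ | ⟨_, _, h₁⟩ | ⟨X, rfl, h₁⟩
      · simp at hB
      · exact absurd h₁ sd_var_inv
      · rcases sd_app_inv h₁ with ⟨B, hB, hX⟩ | ⟨Q, rfl, h₂⟩ | ⟨_, rfl, h₂⟩
        · have hB' : B = map (Option.map some) A₀ := by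
            simp only [map_lam, lam.injEq] at hB
            exact hB.symm
          subst hB'
          rw [hX, instantiate_map_some']
          exact AA.a2 hA₀
        · obtain ⟨T₁, rfl, h₃⟩ := sd_map_rev h₂ some (Option.some_injective _) (lam A₀) rfl
          rcases sd_lam_inv h₃ with ⟨A₀', rfl, h₄⟩ | ⟨_, M, hpat, _⟩
          · exact AA.a1L (ih h₄)
          · exact absurd hpat (aa_not_pattern hA₀ M)
        · exact absurd h₂ sd_var_inv
  | @a2 A₀ hA₀ ih =>
      rcases sd_app_inv h with ⟨B, hB, _⟩ | ⟨_, _, h₁⟩ | ⟨X, rfl, h₁⟩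
      · simp at hB
      · exact absurd h₁ sd_var_inv
      · exact AA.a2 (ih h₁)

theorem dd_step {b : Bool} {V : Type} {T T₁ : Term V} (hT : DD T) (h : SD b T T₁) :
    DD T₁ := by
  rcases hT with rfl | ⟨A, hA, rfl⟩
  · exact Or.inr ⟨_, AA.a1T, theta_step h⟩
  · rcases sd_lam_inv h with ⟨A', rfl, h₁⟩ | ⟨_, M, hpat, _⟩
    · exact Or.inr ⟨A', aa_step hA h₁, rfl⟩
    · exact absurd hpat (aa_not_pattern hA M)

theorem theta_closed {V : Type} : Term.fv (Theta (V := V)) = ∅ := by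
  ext v
  simp [Theta, thetaHalf]

theorem aa_fv {V : Type} {A : Term (Option V)} (hA : AA A) : Term.fv A ⊆ {none} := by
  induction hA with
  | a1T =>
      intro o ho
      simp only [mem_fv_app, mem_fv_var] at ho
      rcases ho with rfl | h | rfl
      · rfl
      · rw [Term.mem_fv_map] at h
        obtain ⟨v, hv, _⟩ := h
        rw [theta_closed] at hv
        exact absurd hv (Set.notMem_empty v)
      · rfl
  | @a1L A₀ hA₀ ih =>
      intro o ho
      simp only [mem_fv_app, mem_fv_var] at ho
      rcases ho with rfl | h | rfl
      · rfl
      · rw [Term.mem_fv_map] at h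
        obtain ⟨v, hv, _⟩ := h
        rw [Term.mem_fv_lam] at hv
        have := ih hv
        simp at this
      · rfl
  | @a2 A₀ hA₀ ih =>
      intro o ho
      simp only [mem_fv_app, mem_fv_var] at ho
      rcases ho with rfl | h
      · rfl
      · exact ih h

theorem dd_fv {V : Type} {T : Term V} (hT : DD T) : Term.fv T = ∅ := by
  rcases hT with rfl | ⟨A, hA, rfl⟩
  · exact theta_closed
  · ext v
    simp only [Term.mem_fv_lam, Set.mem_empty_iff_false, iff_false]
    intro hv
    have := aa_fv hA hv
    simp at this

theorem redD_fv {b : Bool} {W : Type} {M N : Term W} (h : RedD b M N) :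
    Term.fv N ⊆ Term.fv M := by
  induction h with
  | refl => exact subset_rfl
  | tail _ hst ih => exact (sd_fv hst).trans ih

/-! ### Cores, approximation, and the core-step lemma -/

/-- A core: a reduct of `Θ` applied to a reduct of `F`. -/
def CoreD {V : Type} (b : Bool) (F U : Term V) : Prop :=
  ∃ T G, DD T ∧ RedD b F G ∧ U = app T G

/-- `T` approximates `S`: `S` is obtained from `T` by replacing free occurrences
of `y` (at designated positions) by cores. -/
def Approx {V : Type} (b : Bool) (F : Term V) (y : V) (T S : Term V) : Prop :=
  ∃ (I : Type) (C : Term (V ⊕ I)) (σ : I → Term V),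
    (∀ i, CoreD b F (σ i)) ∧
    T = Term.bind (Sum.elim Term.var (fun _ => Term.var y)) C ∧
    S = Term.bind (Sum.elim Term.var σ) C

/-- Reduction in the extended system, avoiding abstraction over `y`. -/
def RedY {V : Type} (R : Term V → Term V → Prop) (F : Term V) (y : V) :
    Term V → Term V → Prop :=
  Relation.ReflTransGen (StepY (Rfy R F y) y)

theorem core_is_app {V : Type} {b : Bool} {F U : Term V} (h : CoreD b F U) :
    ∃ X Y, U = app X Y := by
  obtain ⟨T, G, _, _, rfl⟩ := h
  exact ⟨T, G, rfl⟩

theorem core_fv {V : Type} {b : Bool} {F U : Term V} (h : CoreD b F U)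
    (hF : Term.fv F = ∅) : Term.fv U = ∅ := by
  obtain ⟨T, G, hT, hFG, rfl⟩ := h
  have h1 := dd_fv hT
  have h2 := redD_fv hFG
  rw [hF] at h2
  ext v
  simp only [mem_fv_app, Set.mem_empty_iff_false, iff_false]
  rintro (hv | hv)
  · rw [h1] at hv; exact hv
  · exact h2 hv

theorem core_has_redex {V : Type} {b : Bool} {F U : Term V} (h : CoreD b F U) :
    ∃ X, SD b U X := by
  obtain ⟨T, G, hT, _, rfl⟩ := h
  rcases hT with rfl | ⟨A, _, rfl⟩
  · exact ⟨_, SD.appL (SD.beta _ _)⟩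
  · exact ⟨_, SD.beta _ _⟩

theorem bind_elim_inl {V W : Type} (f : W → Term V) (X : Term V) :
    Term.bind (Sum.elim Term.var f) (Term.map Sum.inl X) = X := by
  rw [Term.bind_map]
  exact Term.bind_var X

theorem approx_refl {V : Type} {b : Bool} {F : Term V} {y : V} (X : Term V) :
    Approx b F y X X :=
  ⟨Empty, Term.map Sum.inl X, fun i => i.elim, fun i => i.elim,
    (bind_elim_inl _ X).symm, (bind_elim_inl _ X).symm⟩

theorem approx_core {V : Type} {b : Bool} {F U : Term V} {y : V}
    (h : CoreD b F U) : Approx b F y (Term.var y) U :=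
  ⟨PUnit, Term.var (Sum.inr PUnit.unit), fun _ => U, fun _ => h, rfl, rfl⟩

theorem approx_app {V : Type} {b : Bool} {F : Term V} {y : V} {T₁ T₂ S₁ S₂ : Term V}
    (h₁ : Approx b F y T₁ S₁) (h₂ : Approx b F y T₂ S₂) :
    Approx b F y (app T₁ T₂) (app S₁ S₂) := by
  obtain ⟨I₁, C₁, σ₁, hc₁, rfl, rfl⟩ := h₁
  obtain ⟨I₂, C₂, σ₂, hc₂, rfl, rfl⟩ := h₂
  refine ⟨I₁ ⊕ I₂,
    app (Term.map (Sum.map id Sum.inl) C₁) (Term.map (Sum.map id Sum.inr) C₂),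
    Sum.elim σ₁ σ₂, fun i => by cases i with
      | inl i => exact hc₁ i
      | inr i => exact hc₂ i, ?_, ?_⟩
  · rw [Term.bind_app, Term.bind_map, Term.bind_map]
    congr 1
    · exact Term.bind_congr C₁ (fun w _ => by cases w <;> rfl)
    · exact Term.bind_congr C₂ (fun w _ => by cases w <;> rfl)
  · rw [Term.bind_app, Term.bind_map, Term.bind_map]
    congr 1
    · exact Term.bind_congr C₁ (fun w _ => by cases w <;> rfl)
    · exact Term.bind_congr C₂ (fun w _ => by cases w <;> rfl)

theorem redY_appL {V : Type} {R : Term V → Term V → Prop} {F : Term V} {y : V}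
    {M M' N : Term V} (h : RedY R F y M M') : RedY R F y (app M N) (app M' N) := by
  induction h with
  | refl => exact Relation.ReflTransGen.refl
  | tail _ hst ih => exact ih.tail (StepY.appL hst)

theorem redY_appR {V : Type} {R : Term V → Term V → Prop} {F : Term V} {y : V}
    {M N N' : Term V} (h : RedY R F y N N') : RedY R F y (app M N) (app M N') := by
  induction h with
  | refl => exact Relation.ReflTransGen.refl
  | tail _ hst ih => exact ih.tail (StepY.appR hst)

theorem redY_abs {V : Type} {R : Term V → Term V → Prop} {F : Term V} {y v : V}
    (hv : v ≠ y) {M M' : Term V} (h : RedY R F y M M') :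
    RedY R F y (Term.abs v M) (Term.abs v M') := by
  induction h with
  | refl => exact Relation.ReflTransGen.refl
  | tail _ hst ih => exact ih.tail (StepY.abs v hv hst)

theorem sdV_stepY {V : Type} [Infinite V] {R : Term V → Term V → Prop} {b : Bool}
    (hF : Fits R b) (F : Term V) (y : V) {M N : Term V} (d : SD b M N) :
    StepY (Rfy R F y) y M N := by
  have := sd_stepY (Q := Rfy R F y) hF y (fun h => Or.inl h) d (fun v => v)
  rwa [Term.map_id, Term.map_id] at this

theorem redD_redY {V : Type} [Infinite V] {R : Term V → Term V → Prop} {b : Bool}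
    (hF : Fits R b) {F : Term V} {y : V} {M N : Term V} (h : RedD b M N) :
    RedY R F y M N := by
  induction h with
  | refl => exact Relation.ReflTransGen.refl
  | tail _ hst ih => exact ih.tail (sdV_stepY hF F y hst)

theorem redY_unfold {V : Type} [Infinite V] {R : Term V → Term V → Prop} {b : Bool}
    (hF : Fits R b) {F G : Term V} {y : V} (hFG : RedD b F G) :
    RedY R F y (Term.var y) (app G (Term.var y)) := by
  refine Relation.ReflTransGen.head (StepY.base (Or.inr ⟨rfl, rfl⟩)) ?_
  exact redY_appL (redD_redY hF hFG)

/-- `X` can be produced from the single variable `y`. -/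
def Blow {V : Type} (R : Term V → Term V → Prop) (b : Bool) (F : Term V) (y : V)
    (X : Term V) : Prop :=
  ∃ E, RedY R F y (Term.var y) E ∧ Approx b F y E X

theorem blow_inst {V : Type} [Infinite V] {R : Term V → Term V → Prop} {b : Bool}
    (hF : Fits R b) {F G : Term V} {y : V} {A : Term (Option V)}
    (hA : AA A) (hFG : RedD b F G) : Blow R b F y (Term.instantiate A G) := by
  induction hA with
  | a1T =>
      refine ⟨app G (Term.var y), redY_unfold hF hFG, ?_⟩
      simp only [Term.instantiate_app, Term.instantiate_var_none, Term.instantiate_map_some]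
      exact approx_app (approx_refl G) (approx_core ⟨Theta, G, Or.inl rfl, hFG, rfl⟩)
  | @a1L A₀ hA₀ _ =>
      refine ⟨app G (Term.var y), redY_unfold hF hFG, ?_⟩
      simp only [Term.instantiate_app, Term.instantiate_var_none, Term.instantiate_map_some]
      exact approx_app (approx_refl G)
        (approx_core ⟨lam A₀, G, Or.inr ⟨A₀, hA₀, rfl⟩, hFG, rfl⟩)
  | @a2 A' hA' ih =>
      obtain ⟨E', hred, hapx⟩ := ih
      refine ⟨app G E', ?_, ?_⟩
      · exact (redY_unfold hF hFG).trans (redY_appR hred)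
      · rw [Term.instantiate_app, Term.instantiate_var_none]
        exact approx_app (approx_refl G) hapx

/-- A step inside a core can be simulated from the variable `y`. -/
theorem core_step {V : Type} [Infinite V] {R : Term V → Term V → Prop} {b : Bool}
    (hF : Fits R b) {F U U' : Term V} {y : V}
    (hU : CoreD b F U) (h : SD b U U') : Blow R b F y U' := by
  obtain ⟨T, G, hT, hFG, rfl⟩ := hU
  rcases sd_app_inv h with ⟨B, hTB, rfl⟩ | ⟨T₁, rfl, h₁⟩ | ⟨G', rfl, h₁⟩
  · rcases hT with rfl | ⟨A, hA, rfl⟩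
    · simp [Theta] at hTB
    · have : B = A := by simpa using hTB.symm
      subst this
      exact blow_inst hF hA hFG
  · exact ⟨Term.var y, Relation.ReflTransGen.refl,
      approx_core ⟨T₁, G, dd_step hT h₁, hFG, rfl⟩⟩
  · exact ⟨Term.var y, Relation.ReflTransGen.refl,
      approx_core ⟨T, G', hT, hFG.tail h₁, rfl⟩⟩

/-! ### The simulation lemma -/

theorem map_some_comm {V W : Type} (f : V → W) (M : Term V) :
    Term.map (Option.map f) (Term.map some M) = Term.map some (Term.map f M) := by
  rw [Term.map_map, Term.map_map]; exact Term.map_congr M (fun v _ => rfl)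

theorem beta_base {V : Type} {R : Term V → Term V → Prop} {b : Bool} (hF : Fits R b)
    (X : Term (Option V)) (Y : Term V) : R (app (lam X) Y) (Term.instantiate X Y) := by
  rcases hF with ⟨rfl, _⟩ | ⟨rfl, _⟩
  · exact ⟨X, Y, rfl, rfl⟩
  · exact Or.inl ⟨X, Y, rfl, rfl⟩

theorem eta_base {V : Type} {R : Term V → Term V → Prop} {b : Bool} (hF : Fits R b)
    (hb : b = true) (X : Term V) :
    R (lam (app (Term.map some X) (Term.var none))) X := by
  rcases hF with ⟨rfl, rfl⟩ | ⟨rfl, _⟩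
  · exact absurd hb (by simp)
  · exact Or.inr rfl

theorem sim {V : Type} [Infinite V] {R : Term V → Term V → Prop} {b : Bool}
    (hF : Fits R b) {F : Term V} (hFc : Term.fv F = ∅) (y : V) :
    ∀ {W : Type} {A A' : Term W}, SD b A A' →
    ∀ (τ : W → V) (I : Type) (C : Term (V ⊕ I)) (σ : I → Term V),
      (∀ i, CoreD b F (σ i)) →
      Term.map τ A = Term.bind (Sum.elim Term.var σ) C →
      ∃ T', RedY R F y (Term.bind (Sum.elim Term.var (fun _ => Term.var y)) C) T' ∧
        Approx b F y T' (Term.map τ A') := by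
  classical
  intro W A A' d
  induction d with
  | @beta W₀ B P =>
      intro τ I C σ hcore hA
      cases C with
      | var w =>
          cases w with
          | inl u => simp at hA
          | inr i =>
              simp only [Term.bind_var', Sum.elim_inr] at hA
              have step : SD b (σ i) (Term.map τ (Term.instantiate B P)) := by
                rw [← hA]
                exact (SD.beta B P).map τ
              exact core_step hF (hcore i) step
      | lam C₀ => simp at hA
      | app C₁ C₂ =>
          simp only [Term.map_app, Term.bind_app, app.injEq] at hA
          obtain ⟨h1, h2⟩ := hA
          cases C₁ with
          | var w =>
              cases w with
              | inl u => simp at h1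
              | inr i =>
                  simp only [Term.bind_var', Sum.elim_inr] at h1
                  obtain ⟨X, Y, hXY⟩ := core_is_app (hcore i)
                  rw [hXY] at h1
                  simp at h1
          | app _ _ => simp at h1
          | lam C₀ =>
              simp only [Term.map_lam, Term.bind_lam, lam.injEq] at h1
              refine ⟨Term.bind (Sum.elim Term.var (fun _ => Term.var y))
                (Term.instantiate C₀ C₂), ?_, ?_⟩
              · refine Relation.ReflTransGen.single (StepY.base (Or.inl ?_))
                rw [Term.bind_instantiate]
                exact beta_base hF _ _
              · refine ⟨I, Term.instantiate C₀ C₂, σ, hcore, rfl, ?_⟩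
                rw [Term.map_instantiate, h1, h2, Term.bind_instantiate]
  | @eta W₀ M₀ hb =>
      intro τ I C σ hcore hA
      cases C with
      | var w =>
          cases w with
          | inl u => simp at hA
          | inr i =>
              simp only [Term.bind_var', Sum.elim_inr] at hA
              obtain ⟨X, Y, hXY⟩ := core_is_app (hcore i)
              rw [hXY] at hA
              simp at hA
      | app _ _ => simp at hA
      | lam C₀ =>
          simp only [Term.map_lam, Term.bind_lam, lam.injEq] at hA
          rw [Term.map_app, map_some_comm, Term.map_var] at hA
          cases C₀ with
          | var o =>
              rcases o with _ | w
              · simp [Term.up] at hA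
              · cases w with
                | inl u => simp [Term.up] at hA
                | inr i =>
                    simp only [Term.bind_var', Term.up, Option.elim, Sum.elim_inr] at hA
                    obtain ⟨X, Y, hXY⟩ := core_is_app (hcore i)
                    rw [hXY] at hA
                    simp only [Term.map_app, app.injEq] at hA
                    obtain ⟨v, _, hv⟩ := map_eq_var hA.2.symm
                    simp at hv
          | lam _ => simp at hA
          | app C₁ C₂ =>
              simp only [Term.bind_app, app.injEq] at hA
              obtain ⟨h1, h2⟩ := hA
              -- C₂ must be `var none`
              have hC₂ : C₂ = Term.var none := by
                cases C₂ with
                | var o =>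
                    rcases o with _ | w
                    · rfl
                    · cases w with
                      | inl u => simp [Term.up] at h2
                      | inr i =>
                          simp only [Term.bind_var', Term.up, Option.elim, Sum.elim_inr] at h2
                          obtain ⟨X, Y, hXY⟩ := core_is_app (hcore i)
                          rw [hXY] at h2
                          simp at h2
                | app _ _ => simp at h2
                | lam _ => simp at h2
              subst hC₂
              -- C₁ has no `none`, hence is a weakening
              have hnone : none ∉ Term.fv C₁ := by
                intro hn
                have : (none : Option V) ∈ Term.fv (Term.bind
                    (Term.up (Sum.elim Term.var σ)) C₁) := by
                  rw [Term.mem_fv_bind]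
                  exact ⟨none, hn, by simp [Term.up]⟩
                rw [← h1, Term.mem_fv_map] at this
                obtain ⟨v, _, hv⟩ := this
                simp at hv
              obtain ⟨C₁', rfl⟩ := Term.exists_preimage (some : (V ⊕ I) → Option (V ⊕ I)) C₁
                (by intro o ho; cases o with
                    | none => exact absurd ho hnone
                    | some w => exact ⟨w, rfl⟩)
              have hup : ∀ (h : (V ⊕ I) → Term V),
                  Term.bind (Term.up h) (Term.map some C₁') =
                    Term.map some (Term.bind h C₁') := by
                intro h
                rw [Term.bind_map, Term.map_bind]
                exact Term.bind_congr C₁' (fun w _ => rfl)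
              rw [hup] at h1
              have h1' : Term.map τ M₀ = Term.bind (Sum.elim Term.var σ) C₁' :=
                Term.map_inj (Option.some_injective _) h1
              refine ⟨Term.bind (Sum.elim Term.var (fun _ => Term.var y)) C₁', ?_, ?_⟩
              · refine Relation.ReflTransGen.single (StepY.base (Or.inl ?_))
                have hY : Term.bind (Sum.elim Term.var (fun _ => Term.var y))
                    (lam (app (Term.map some C₁') (Term.var none))) =
                    lam (app (Term.map some (Term.bind
                      (Sum.elim Term.var (fun _ => Term.var y)) C₁')) (Term.var none)) := by
                  rw [Term.bind_lam, Term.bind_app, hup]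
                  rfl
                rw [hY]
                exact eta_base hF hb _
              · exact ⟨I, C₁', σ, hcore, rfl, h1'⟩
  | @appL W₀ A₁ A₁' A₂ d₁ ih =>
      intro τ I C σ hcore hA
      cases C with
      | var w =>
          cases w with
          | inl u => simp at hA
          | inr i =>
              simp only [Term.bind_var', Sum.elim_inr] at hA
              have step : SD b (σ i) (Term.map τ (app A₁' A₂)) := by
                rw [← hA]
                exact (SD.appL d₁).map τ
              exact core_step hF (hcore i) step
      | lam _ => simp at hA
      | app C₁ C₂ =>
          simp only [Term.map_app, Term.bind_app, app.injEq] at hA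
          obtain ⟨h1, h2⟩ := hA
          obtain ⟨T₁', hred₁, hapx₁⟩ := ih τ I C₁ σ hcore h1
          refine ⟨app T₁' (Term.bind (Sum.elim Term.var (fun _ => Term.var y)) C₂),
            redY_appL hred₁, ?_⟩
          rw [Term.map_app]
          exact approx_app hapx₁ ⟨I, C₂, σ, hcore, rfl, h2⟩
  | @appR W₀ A₁ A₂ A₂' d₂ ih =>
      intro τ I C σ hcore hA
      cases C with
      | var w =>
          cases w with
          | inl u => simp at hA
          | inr i =>
              simp only [Term.bind_var', Sum.elim_inr] at hA
              have step : SD b (σ i) (Term.map τ (app A₁ A₂')) := by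
                rw [← hA]
                exact (SD.appR d₂).map τ
              exact core_step hF (hcore i) step
      | lam _ => simp at hA
      | app C₁ C₂ =>
          simp only [Term.map_app, Term.bind_app, app.injEq] at hA
          obtain ⟨h1, h2⟩ := hA
          obtain ⟨T₂', hred₂, hapx₂⟩ := ih τ I C₂ σ hcore h2
          refine ⟨app (Term.bind (Sum.elim Term.var (fun _ => Term.var y)) C₁) T₂',
            redY_appR hred₂, ?_⟩
          rw [Term.map_app]
          exact approx_app ⟨I, C₁, σ, hcore, rfl, h1⟩ hapx₂
  | @lam W₀ B B' d₀ ih =>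
      intro τ I C σ hcore hA
      cases C with
      | var w =>
          cases w with
          | inl u => simp at hA
          | inr i =>
              simp only [Term.bind_var', Sum.elim_inr] at hA
              have step : SD b (σ i) (Term.map τ (lam B')) := by
                rw [← hA]
                exact (SD.lam d₀).map τ
              exact core_step hF (hcore i) step
      | app _ _ => simp at hA
      | lam C₀ =>
          simp only [Term.map_lam, Term.bind_lam, lam.injEq] at hA
          -- choose a fresh variable v
          obtain ⟨v, hv⟩ := fresh_exists (s := {y} ∪ (fun w => τ w) '' {w | some w ∈ Term.fv B}
              ∪ {u | some (Sum.inl u) ∈ Term.fv C₀}) (by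
            refine (((Set.finite_singleton y).union ?_).union ?_)
            · exact Set.Finite.image _ ((Term.fv_finite B).preimage
                (Set.injOn_of_injective (Option.some_injective _)))
            · have : {u | some (Sum.inl u) ∈ Term.fv C₀} =
                  (fun u : V => some (Sum.inl u)) ⁻¹' Term.fv C₀ := rfl
              rw [this]
              exact (Term.fv_finite C₀).preimage (Set.injOn_of_injective
                (fun a a' h => by simpa using h)))
          have hvy : v ≠ y := fun h => hv (Or.inl (Or.inl (by simp [h])))
          have hyv : y ≠ v := Ne.symm hvy
          have hvB : ∀ w, some w ∈ Term.fv B → τ w ≠ v :=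
            fun w hw h => hv (Or.inl (Or.inr ⟨w, hw, h⟩))
          have hvC : ∀ u, some (Sum.inl u) ∈ Term.fv C₀ → u ≠ v :=
            fun u hu h => hv (Or.inr (show some (Sum.inl v) ∈ Term.fv C₀ from h ▸ hu))
          set τ' : Option W₀ → V := fun o => o.elim v τ with hτ'
          set e : Option (V ⊕ I) → V ⊕ I := fun o => o.elim (Sum.inl v) id with he
          -- Claim 1 : map τ' B = bind σ̂ (map e C₀)
          have claim1 : Term.map τ' B = Term.bind (Sum.elim Term.var σ) (Term.map e C₀) := by
            have hgv : Term.map τ' B =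
                Term.map (fun o : Option V => o.elim v id) (Term.map (Option.map τ) B) := by
              rw [Term.map_map]
              exact Term.map_congr B (fun o _ => by cases o <;> rfl)
            rw [hgv, hA, Term.map_bind, Term.bind_map]
            refine Term.bind_congr C₀ (fun o _ => ?_)
            rcases o with _ | w
            · rfl
            · cases w with
              | inl u => rfl
              | inr i =>
                  show Term.map _ (Term.map some (σ i)) = σ i
                  rw [Term.map_map]
                  have : (fun x => Option.elim (some x) v id) = fun x : V => x := rfl
                  rw [this, Term.map_id]
          obtain ⟨T'', hred, hapx⟩ := ih τ' I (Term.map e C₀) σ hcore claim1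
          -- Claim 2 : abs v (bind yĉ (map e C₀)) = bind yĉ (lam C₀)
          have claim2 : Term.abs v (Term.bind (Sum.elim Term.var (fun _ => Term.var y))
              (Term.map e C₀)) =
              lam (Term.bind (Term.up (Sum.elim Term.var (fun _ => Term.var y))) C₀) := by
            show lam _ = _
            congr 1
            rw [Term.bind_map, Term.map_bind]
            refine Term.bind_congr C₀ (fun o ho => ?_)
            rcases o with _ | w
            · simp [he, Term.up]
            · cases w with
              | inl u =>
                  have hu : u ≠ v := hvC u ho
                  simp [he, Term.up, hu]
              | inr i =>
                  simp [he, Term.up, hyv]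
          -- unpack the approximation of T''
          obtain ⟨I', C'', σ'', hcore'', hT'', hS''⟩ := hapx
          set e' : (V ⊕ I') → Option (V ⊕ I') :=
            Sum.elim (fun u => if u = v then none else some (Sum.inl u))
              (fun i => some (Sum.inr i)) with he'
          have hfvB' : ∀ w, some w ∈ Term.fv B' → τ w ≠ v :=
            fun w hw => hvB w (sd_fv d₀ hw)
          -- (E1) : abs v T'' = bind yĉ (lam (map e' C''))
          have E1 : Term.abs v T'' =
              Term.bind (Sum.elim Term.var (fun _ => Term.var y)) (lam (Term.map e' C'')) := by
            rw [hT'']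
            show lam _ = lam _
            congr 1
            rw [Term.map_bind, Term.bind_map]
            refine Term.bind_congr C'' (fun w _ => ?_)
            cases w with
            | inl u =>
                by_cases hu : u = v <;>
                  simp [he', Term.up, hu]
            | inr i =>
                simp [he', Term.up, hyv]
          -- (E2) : map τ (lam B') = bind σ̂'' (lam (map e' C''))
          have E2 : Term.map τ (lam B') =
              Term.bind (Sum.elim Term.var σ'') (lam (Term.map e' C'')) := by
            rw [Term.map_lam]
            show lam _ = lam _
            congr 1
            have hbody : Term.map (Option.map τ) B' =
                Term.map (fun u => if u = v then none else some u) (Term.map τ' B') := by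
              rw [Term.map_map]
              refine Term.map_congr B' (fun o ho => ?_)
              rcases o with _ | w
              · simp [hτ']
              · have : τ w ≠ v := hfvB' w ho
                simp [hτ', this]
            rw [hbody, hS'', Term.map_bind, Term.bind_map]
            refine Term.bind_congr C'' (fun w _ => ?_)
            cases w with
            | inl u =>
                by_cases hu : u = v <;>
                  simp [he', Term.up, hu]
            | inr i =>
                have h1 : e' (Sum.inr i) = some (Sum.inr i) := rfl
                show Term.map _ (σ'' i) = Term.up (Sum.elim Term.var σ'') (e' (Sum.inr i))
                rw [h1]
                show _ = Term.map some (σ'' i)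
                exact Term.map_of_closed' _ _ _ (core_fv (hcore'' i) hFc)
          refine ⟨Term.abs v T'', ?_, ?_⟩
          · have hCeq : Term.bind (Sum.elim Term.var (fun _ => Term.var y)) (lam C₀) =
                Term.abs v (Term.bind (Sum.elim Term.var (fun _ => Term.var y))
                  (Term.map e C₀)) := by
              rw [claim2]
              rfl
            rw [hCeq]
            exact redY_abs hvy hred
          · exact ⟨I', lam (Term.map e' C''), σ'', hcore'', E1, E2⟩

/-! ### Substituting `M` for `y`, and the endgame -/

theorem requiv_appL {V : Type} {R : Term V → Term V → Prop} {X X' Y : Term V}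
    (h : REquiv R X X') : REquiv R (app X Y) (app X' Y) := by
  induction h with
  | rel _ _ hst => exact Relation.EqvGen.rel _ _ (Step.appL hst)
  | refl _ => exact Relation.EqvGen.refl _
  | symm _ _ _ ih => exact Relation.EqvGen.symm _ _ ih
  | trans _ _ _ _ _ ih₁ ih₂ => exact Relation.EqvGen.trans _ _ _ ih₁ ih₂

theorem requiv_appR {V : Type} {R : Term V → Term V → Prop} {X Y Y' : Term V}
    (h : REquiv R Y Y') : REquiv R (app X Y) (app X Y') := by
  induction h with
  | rel _ _ hst => exact Relation.EqvGen.rel _ _ (Step.appR hst)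
  | refl _ => exact Relation.EqvGen.refl _
  | symm _ _ _ ih => exact Relation.EqvGen.symm _ _ ih
  | trans _ _ _ _ _ ih₁ ih₂ => exact Relation.EqvGen.trans _ _ _ ih₁ ih₂

theorem requiv_abs {V : Type} {R : Term V → Term V → Prop} (v : V) {X X' : Term V}
    (h : REquiv R X X') : REquiv R (Term.abs v X) (Term.abs v X') := by
  induction h with
  | rel _ _ hst => exact Relation.EqvGen.rel _ _ (Step.abs v hst)
  | refl _ => exact Relation.EqvGen.refl _
  | symm _ _ _ ih => exact Relation.EqvGen.symm _ _ ih
  | trans _ _ _ _ _ ih₁ ih₂ => exact Relation.EqvGen.trans _ _ _ ih₁ ih₂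

theorem subst_var_self {V : Type} (y : V) (M : Term V) :
    Term.subst (Term.var y) y M = M := by
  simp [Term.subst]

theorem subst_of_closed {V : Type} {N : Term V} (y : V) (M : Term V)
    (hN : Term.fv N = ∅) : Term.subst N y M = N :=
  Term.bind_of_closed _ N hN

theorem subst_app {V : Type} (X Y : Term V) (y : V) (M : Term V) :
    Term.subst (app X Y) y M = app (Term.subst X y M) (Term.subst Y y M) := rfl

theorem subst_abs {V : Type} {v y : V} (hvy : v ≠ y) {M : Term V}
    (hMc : Term.fv M = ∅) (X : Term V) :
    Term.subst (Term.abs v X) y M = Term.abs v (Term.subst X y M) := by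
  classical
  unfold Term.subst Term.abs
  rw [Term.bind_lam, Term.bind_map, Term.map_bind]
  congr 1
  refine Term.bind_congr X (fun u _ => ?_)
  by_cases huv : u = v
  · subst huv
    have : u ≠ y := hvy
    simp [Term.up, this]
  · by_cases huy : u = y
    · subst huy
      simp only [Term.up, if_neg huv, if_pos rfl, Option.elim]
      exact (Term.map_of_closed' _ _ _ hMc).symm
    · simp [Term.up, huv, huy]

theorem stepY_subst {V : Type} {R : Term V → Term V → Prop} {b : Bool}
    (hFit : Fits R b) {F M : Term V} (hFc : Term.fv F = ∅) (hMc : Term.fv M = ∅)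
    (hfix : REquiv R (Term.app F M) M) {y : V} {A B : Term V}
    (h : StepY (Rfy R F y) y A B) :
    REquiv R (Term.subst A y M) (Term.subst B y M) := by
  induction h with
  | base hr =>
      rcases hr with hr | ⟨rfl, rfl⟩
      · refine Relation.EqvGen.rel _ _ (Step.base ?_)
        rcases hFit with ⟨rfl, _⟩ | ⟨rfl, _⟩
        · obtain ⟨B₀, P, rfl, rfl⟩ := hr
          unfold Term.subst
          rw [Term.bind_app, Term.bind_lam, Term.bind_instantiate]
          exact ⟨_, _, rfl, rfl⟩
        · rcases hr with ⟨B₀, P, rfl, rfl⟩ | hr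
          · unfold Term.subst
            rw [Term.bind_app, Term.bind_lam, Term.bind_instantiate]
            exact Or.inl ⟨_, _, rfl, rfl⟩
          · rw [hr]
            refine Or.inr ?_
            show _ = Term.lam (Term.app (Term.map some _) (Term.var none))
            unfold Term.subst
            rw [Term.bind_lam, Term.bind_app, Term.bind_map]
            congr 2
            rw [Term.map_bind]
            exact Term.bind_congr _ (fun w _ => rfl)
      · rw [subst_app, subst_var_self, subst_of_closed y M hFc]
        exact Relation.EqvGen.symm _ _ hfix
  | appL _ ih => exact requiv_appL ih
  | appR _ ih => exact requiv_appR ih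
  | abs v hv _ ih =>
      rw [subst_abs hv hMc, subst_abs hv hMc]
      exact requiv_abs v ih

theorem redY_subst {V : Type} {R : Term V → Term V → Prop} {b : Bool}
    (hFit : Fits R b) {F M : Term V} (hFc : Term.fv F = ∅) (hMc : Term.fv M = ∅)
    (hfix : REquiv R (Term.app F M) M) {y : V} {A B : Term V}
    (h : RedY R F y A B) :
    REquiv R (Term.subst A y M) (Term.subst B y M) := by
  induction h with
  | refl => exact Relation.EqvGen.refl _
  | tail _ hst ih => exact Relation.EqvGen.trans _ _ _ ih (stepY_subst hFit hFc hMc hfix hst)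

theorem sd_exists_bind {b : Bool} : ∀ {W : Type} (C : Term W) {X : Type} (h : W → Term X)
    (w : W), w ∈ Term.fv C → (∃ Z, SD b (h w) Z) → ∃ Y, SD b (Term.bind h C) Y
  | _, Term.var v, _, h, w, hw, hZ => by
      rw [Term.mem_fv_var] at hw
      subst hw
      exact hZ
  | _, Term.app C₁ C₂, _, h, w, hw, hZ => by
      rw [Term.mem_fv_app] at hw
      rcases hw with hw | hw
      · obtain ⟨Y, hY⟩ := sd_exists_bind C₁ h w hw hZ
        exact ⟨_, SD.appL hY⟩
      · obtain ⟨Y, hY⟩ := sd_exists_bind C₂ h w hw hZ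
        exact ⟨_, SD.appR hY⟩
  | _, Term.lam C₀, _, h, w, hw, hZ => by
      rw [Term.mem_fv_lam] at hw
      obtain ⟨Z, hZ'⟩ := hZ
      obtain ⟨Y, hY⟩ := sd_exists_bind C₀ (Term.up h) (some w) hw
        ⟨Term.map some Z, hZ'.map some⟩
      exact ⟨_, SD.lam hY⟩

theorem sim_red {V : Type} [Infinite V] {R : Term V → Term V → Prop} {b : Bool}
    (hFit : Fits R b) {F : Term V} (hFc : Term.fv F = ∅) (y : V) :
    ∀ {S S' : Term V}, RedD b S S' → ∀ T, Approx b F y T S →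
      ∃ T', RedY R F y T T' ∧ Approx b F y T' S' := by
  intro S S' hred
  induction hred with
  | refl => exact fun T h => ⟨T, Relation.ReflTransGen.refl, h⟩
  | tail _ hstep ih =>
      intro T h
      obtain ⟨T₁, h₁, hapx₁⟩ := ih T h
      obtain ⟨I, C, σ, hcore, hT, hS⟩ := hapx₁
      obtain ⟨T', hr, ha⟩ := sim hFit hFc y hstep (fun v => v) I C σ hcore
        (by rw [Term.map_id]; exact hS)
      rw [Term.map_id] at ha
      exact ⟨T', h₁.trans (hT ▸ hr), ha⟩

theorem approx_reduced {V : Type} [Infinite V] {R : Term V → Term V → Prop} {b : Bool}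
    (hFit : Fits R b) {F : Term V} {y : V} {T N' : Term V}
    (h : Approx b F y T N') (hn : Reduced R N') : T = N' := by
  obtain ⟨I, C, σ, hcore, rfl, rfl⟩ := h
  have hnofv : ∀ i : I, Sum.inr i ∉ Term.fv C := by
    intro i hi
    obtain ⟨Y, hY⟩ := sd_exists_bind (b := b) C (Sum.elim Term.var σ) (Sum.inr i) hi
      (core_has_redex (hcore i))
    exact reduced_no_sd hFit hn Y hY
  exact Term.bind_congr C (fun w hw => by
    cases w with
    | inl u => rfl
    | inr i => exact absurd hw (hnofv i))
/-- Let `R` be β or βη. For all closed λ-terms `F` and `M`,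
if `F M ≈_R M` then `Θ F ≤_R M`, where `Θ` is Turing's fixed point combinator. -/
theorem Theta_produces_least_fixed_points {V : Type} [Infinite V]
    (R : Term V → Term V → Prop) (hR : R = @Beta V ∨ R = @BetaEta V)
    (F M : Term V) (hF : Closed F) (hM : Closed M)
    (hfix : REquiv R (Term.app F M) M) :
    LeR R (Term.app Theta F) M := by
  obtain ⟨b, hFit⟩ : ∃ b, Fits R b := by
    rcases hR with rfl | rfl
    · exact ⟨false, Or.inl ⟨rfl, rfl⟩⟩
    · exact ⟨true, Or.inr ⟨rfl, rfl⟩⟩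
  intro N hN N' hNF
  obtain ⟨hred, heq⟩ := hNF
  have hRedD : RedD b (Term.app (Term.app Theta F) N) N' := requiv_to_redD hFit heq hred
  have hFc : Term.fv F = ∅ := hF
  have hNc : Term.fv N = ∅ := hN
  have hMc : Term.fv M = ∅ := hM
  have hN'c : Term.fv N' = ∅ := by
    have h1 := redD_fv hRedD
    ext v
    simp only [Set.mem_empty_iff_false, iff_false]
    intro hv
    have h2 := h1 hv
    rw [Term.mem_fv_app, Term.mem_fv_app] at h2
    rcases h2 with (h | h) | h
    · rw [theta_closed] at h; exact h
    · rw [hFc] at h; exact h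
    · rw [hNc] at h; exact h
  have hy : Nonempty V := inferInstance
  obtain ⟨y⟩ := hy
  have happrox : Approx b F y (Term.app (Term.var y) N) (Term.app (Term.app Theta F) N) :=
    approx_app (approx_core ⟨Theta, F, Or.inl rfl, Relation.ReflTransGen.refl, rfl⟩)
      (approx_refl N)
  obtain ⟨T', hredY, hapx⟩ := sim_red hFit hFc y hRedD _ happrox
  have hT' : T' = N' := approx_reduced hFit hapx hred
  subst hT'
  have hkey := redY_subst hFit hFc hMc hfix hredY
  rw [subst_app, subst_var_self, subst_of_closed y M hNc, subst_of_closed y M hN'c] at hkey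
  exact ⟨hred, hkey⟩
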